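/- arXiv:1611.08739 — 8 statements merged into one kernel-verified Lean document; each statement's English description precedes it below -/
import Mathlib

section
/- Let A be a group of automorphisms of a finite group G with gcd(|A|,|G|) = 1. Then [[G,A],A] = [G,A]. -/
/-- Coprime action on a finite group: `[[G,A],A] = [G,A]`, where `[G,A]` is the
subgroup generated by the elements `g⁻¹ * α g` for `g ∈ G`, `α ∈ A`. -/
theorem stmt_5 {G : Type*} [Group G] [Finite G] (A : Subgroup (MulAut G))
    (hcop : Nat.Coprime (Nat.card A) (Nat.card G)) :
    Subgroup.closure {y : G |
        ∃ h ∈ Subgroup.closure {y : G | ∃ g : G, ∃ α ∈ A, y = g⁻¹ * α g},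
          ∃ α ∈ A, y = h⁻¹ * α h}
      = Subgroup.closure {y : G | ∃ g : G, ∃ α ∈ A, y = g⁻¹ * α g} := by
  classical
  haveI : Finite (MulAut G) :=
    Finite.of_injective (fun e : MulAut G => (e : G → G)) DFunLike.coe_injective
  set S : Set G := {y : G | ∃ g : G, ∃ α ∈ A, y = g⁻¹ * α g} with hS
  set H : Subgroup G := Subgroup.closure S with hH
  set K : Subgroup G := Subgroup.closure {y : G | ∃ h ∈ H, ∃ α ∈ A, y = h⁻¹ * α h} with hK
  have hgenH : ∀ (g : G) (α : MulAut G), α ∈ A → g⁻¹ * α g ∈ H :=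
    fun g α hα => Subgroup.subset_closure ⟨g, α, hα, rfl⟩
  have hHinv : ∀ (α : MulAut G), α ∈ A → ∀ h : G, h ∈ H → α h ∈ H := by
    intro α hα h hh
    have hmap : Subgroup.map α.toMonoidHom H ≤ H := by
      rw [hH, MonoidHom.map_closure]
      apply Subgroup.closure_mono
      rintro y ⟨z, ⟨g, β, hβ, rfl⟩, rfl⟩
      refine ⟨α g, α * β * α⁻¹, A.mul_mem (A.mul_mem hα hβ) (A.inv_mem hα), ?_⟩
      simp [map_mul, map_inv, MulAut.mul_apply, MulAut.inv_apply_self]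
    exact hmap ⟨h, hh, rfl⟩
  -- key case: α of prime power order
  have keyP : ∀ (p : ℕ), p.Prime → ∀ (α : MulAut G), α ∈ A → (∃ k, orderOf α = p ^ k) →
      ∀ g : G, g⁻¹ * α g ∈ K := by
    intro p hp α hα hpk g
    obtain ⟨k, hk⟩ := hpk
    rcases Nat.eq_zero_or_pos k with hk0 | hkpos
    · subst hk0
      rw [pow_zero, orderOf_eq_one_iff] at hk
      subst hk
      simpa using K.one_mem
    · haveI : Fact p.Prime := ⟨hp⟩
      have hpA : p ∣ Nat.card A := by
        have h2 : orderOf (⟨α, hα⟩ : A) ∣ Nat.card A := orderOf_dvd_natCard _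
        rw [Subgroup.orderOf_mk, hk] at h2
        exact dvd_trans (dvd_pow_self p hkpos.ne') h2
      have hpG : ¬ p ∣ Nat.card G := by
        intro hpg
        have : p ∣ 1 := hcop ▸ Nat.dvd_gcd hpA hpg
        exact hp.one_lt.ne' (Nat.dvd_one.mp this)
      have hpH : ¬ p ∣ Nat.card H :=
        fun hd => hpG (hd.trans (Subgroup.card_subgroup_dvd_card H))
      set P : Subgroup (MulAut G) := Subgroup.zpowers α with hP
      have hPA : P ≤ A := Subgroup.zpowers_le.mpr hα
      have hPp : IsPGroup p P := IsPGroup.of_card (by rw [Nat.card_zpowers, hk])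
      have hmem : ∀ (β : P) (h : H), g⁻¹ * (β : MulAut G) (g * h) ∈ H := by
        intro β h
        have hβA : (β : MulAut G) ∈ A := hPA β.2
        have heq : g⁻¹ * (β : MulAut G) (g * h)
            = (g⁻¹ * (β : MulAut G) g) * ((β : MulAut G) h) := by
          rw [map_mul, mul_assoc]
        rw [heq]
        exact H.mul_mem (hgenH g _ hβA) (hHinv _ hβA _ h.2)
      letI : SMul P H := ⟨fun β h => ⟨g⁻¹ * (β : MulAut G) (g * h), hmem β h⟩⟩
      letI : MulAction P H :=
        { one_smul := by
            intro h
            apply Subtype.ext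
            show g⁻¹ * ((1 : P) : MulAut G) (g * h) = (h : G)
            simp
          mul_smul := by
            intro β γ h
            apply Subtype.ext
            show g⁻¹ * ((β * γ : P) : MulAut G) (g * (h : G))
              = g⁻¹ * (β : MulAut G) (g * (g⁻¹ * (γ : MulAut G) (g * (h : G))))
            simp [MulAut.mul_apply] }
      obtain ⟨h₀, hh₀⟩ := hPp.nonempty_fixed_point_of_prime_not_dvd_card H hpH
      have hα0 := hh₀ ⟨α, Subgroup.mem_zpowers α⟩
      have heq : g⁻¹ * α (g * (h₀ : G)) = (h₀ : G) := congrArg Subtype.val hα0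
      rw [map_mul, ← mul_assoc] at heq
      have h1 : g⁻¹ * α g = (h₀ : G) * (α (h₀ : G))⁻¹ := eq_mul_inv_of_mul_eq heq
      have h2 : (h₀ : G) * (α (h₀ : G))⁻¹ = ((h₀ : G)⁻¹)⁻¹ * α ((h₀ : G)⁻¹) := by
        rw [map_inv, inv_inv]
      rw [h1, h2]
      exact Subgroup.subset_closure ⟨(h₀ : G)⁻¹, H.inv_mem h₀.2, α, hα, rfl⟩
  -- general case by strong induction on the order
  have main : ∀ n : ℕ, ∀ (α : MulAut G), α ∈ A → orderOf α = n → ∀ g : G, g⁻¹ * α g ∈ K := by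
    intro n
    induction n using Nat.strong_induction_on with
    | _ n ih =>
      intro α hα hn g
      by_cases hprime : ∃ p k : ℕ, p.Prime ∧ n = p ^ k
      · obtain ⟨p, k, hp, rfl⟩ := hprime
        exact keyP p hp α hα ⟨k, hn⟩ g
      · have hn0 : n ≠ 0 := by
          rw [← hn]; exact (orderOf_pos α).ne'
        have hn1 : n ≠ 1 := fun h => hprime ⟨2, 0, Nat.prime_two, by simp [h]⟩
        set p := n.minFac with hpdef
        have hp : p.Prime := Nat.minFac_prime hn1
        set e := n.factorization p with hedef
        have hpe : p ^ e ∣ n := Nat.ordProj_dvd n p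
        set m := n / p ^ e with hmdef
        have hmn : p ^ e * m = n := Nat.mul_div_cancel' hpe
        have hcop2 : Nat.Coprime (p ^ e) m :=
          Nat.Coprime.pow_left _ (Nat.coprime_ordCompl hp hn0)
        have hm0 : m ≠ 0 := by
          intro h; rw [h, mul_zero] at hmn; exact hn0 hmn.symm
        have he0 : e ≠ 0 := (hp.factorization_pos_of_dvd hn0 (Nat.minFac_dvd n)).ne'
        have hpe1 : 1 < p ^ e := Nat.one_lt_pow he0 hp.one_lt
        have hmlt : m < n := by
          rw [hmdef]
          exact Nat.div_lt_self (Nat.pos_of_ne_zero hn0) hpe1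
        obtain ⟨x, y, hxy⟩ := Nat.Coprime.isCoprime hcop2
        set β₁ : MulAut G := α ^ (y * (m : ℤ)) with hb1
        set β₂ : MulAut G := α ^ (x * ((p ^ e : ℕ) : ℤ)) with hb2
        have hβ₁A : β₁ ∈ A := A.zpow_mem hα _
        have hβ₂A : β₂ ∈ A := A.zpow_mem hα _
        have hαn : α ^ (n : ℤ) = 1 := by
          rw [zpow_natCast, ← hn, pow_orderOf_eq_one]
        have hb1ord : orderOf β₁ ∣ p ^ e := by
          apply orderOf_dvd_of_pow_eq_one
          rw [hb1, ← zpow_natCast, ← zpow_mul]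
          have hx1 : y * (m : ℤ) * ((p ^ e : ℕ) : ℤ) = (n : ℤ) * y := by
            push_cast [← hmn]; ring
          rw [hx1, zpow_mul, hαn, one_zpow]
        have hb2ord : orderOf β₂ ∣ m := by
          apply orderOf_dvd_of_pow_eq_one
          rw [hb2, ← zpow_natCast, ← zpow_mul]
          have hx2 : x * ((p ^ e : ℕ) : ℤ) * (m : ℤ) = (n : ℤ) * x := by
            push_cast [← hmn]; ring
          rw [hx2, zpow_mul, hαn, one_zpow]
        obtain ⟨j, hjle, hj⟩ := (Nat.dvd_prime_pow hp).mp hb1ord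
        have hsplit : α = β₂ * β₁ := by
          rw [hb2, hb1, ← zpow_add, hxy, zpow_one]
        have hdecomp : g⁻¹ * α g = (g⁻¹ * β₁ g) * ((β₁ g)⁻¹ * β₂ (β₁ g)) := by
          rw [hsplit, MulAut.mul_apply]
          group
        rw [hdecomp]
        refine K.mul_mem ?_ ?_
        · exact keyP p hp β₁ hβ₁A ⟨j, hj⟩ g
        · have hlt : orderOf β₂ < n :=
            lt_of_le_of_lt (Nat.le_of_dvd (Nat.pos_of_ne_zero hm0) hb2ord) hmlt
          exact ih (orderOf β₂) hlt β₂ hβ₂A rfl (β₁ g)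
  apply le_antisymm
  · rw [hK, Subgroup.closure_le]
    rintro y ⟨h, hh, α, hα, rfl⟩
    exact H.mul_mem (H.inv_mem hh) (hHinv α hα h hh)
  · rw [hH, Subgroup.closure_le]
    rintro y ⟨g, α, hα, rfl⟩
    exact main (orderOf α) α hα rfl g
end

section
/- Let G be a finite group admitting an automorphism α with gcd(ord(α),|G|) = 1 such that G' ≤ C_G(α). Then C_G(α) commutes elementwise with [G,α], i.e. [C_G(α), [G,α]] = 1. -/
open scoped commutatorElement

/-- If a finite group `G` admits an automorphism `α` of order coprime to `|G|` with
`G' ≤ C_G(α)`, then every fixed point of `α` commutes with every element of `[G,α]`. -/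
theorem stmt_6 {G : Type*} [Group G] [Finite G] (α : MulAut G)
    (hcop : Nat.Coprime (orderOf α) (Nat.card G))
    (hG' : ∀ x ∈ commutator G, α x = x) :
    ∀ c : G, α c = c →
      ∀ x ∈ Subgroup.closure {y : G | ∃ g : G, y = g⁻¹ * α g}, Commute c x := by
  intro c hc x hx
  refine Subgroup.closure_induction (fun y hy => ?_) (Commute.one_right c)
    (fun a b _ _ ha hb => ha.mul_right hb) (fun a _ ha => ha.inv_right) hx
  obtain ⟨g, rfl⟩ := hy
  have hmem : ⁅c⁻¹, g⁆ ∈ commutator G := by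
    rw [commutator_def]
    exact Subgroup.commutator_mem_commutator (Subgroup.mem_top _) (Subgroup.mem_top _)
  have hkey := hG' _ hmem
  rw [commutatorElement_def] at hkey
  simp only [map_mul, map_inv, hc, inv_inv] at hkey
  -- hkey : c⁻¹ * α g * c * (α g)⁻¹ = c⁻¹ * g * c * g⁻¹
  set a := α g with ha
  have h2 : a * c * a⁻¹ = g * c * g⁻¹ := by
    have := congrArg (fun z => c * z) hkey
    simpa [mul_assoc] using this
  show c * (g⁻¹ * a) = (g⁻¹ * a) * c
  calc c * (g⁻¹ * a) = g⁻¹ * (g * c * g⁻¹) * a := by group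
    _ = g⁻¹ * (a * c * a⁻¹) * a := by rw [h2]
    _ = (g⁻¹ * a) * c := by group
end

section
/- Let G be a finite group admitting a coprime automorphism α such that G' ≤ C_G(α), and let Z = Z([G,α]) be the center of [G,α]. Then [Z,α] ≤ Z(G). -/
set_option linter.unusedSectionVars false
section Aux
variable {G : Type*} [Group G] [Finite G] (α : MulAut G)

open scoped commutatorElement in
/-- Fixed points of α commute with the generators of [G,α]. -/
lemma aux_fix_commute (hG' : ∀ x ∈ commutator G, α x = x) {c : G} (hc : α c = c) (g : G) :
    Commute c (g⁻¹ * α g) := by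
  have hmem : ⁅g, c⁆ ∈ commutator G :=
    Subgroup.commutator_mem_commutator (Subgroup.mem_top g) (Subgroup.mem_top c)
  have h := hG' _ hmem
  rw [commutatorElement_def, map_mul, map_mul, map_mul, map_inv, map_inv, hc] at h
  -- h : α g * c * (α g)⁻¹ * c⁻¹ = g * c * g⁻¹ * c⁻¹
  have key : α g * c * (α g)⁻¹ = g * c * g⁻¹ := mul_right_cancel h
  have : c * (g⁻¹ * α g) = (g⁻¹ * α g) * c := by
    calc c * (g⁻¹ * α g) = g⁻¹ * (g * c * g⁻¹) * α g := by group
      _ = g⁻¹ * (α g * c * (α g)⁻¹) * α g := by rw [key]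
      _ = (g⁻¹ * α g) * c := by group
  exact this

/-- If g⁻¹ α g lies in the commutator subgroup, then g is fixed by α. -/
lemma aux_ker (hcop : Nat.Coprime (orderOf α) (Nat.card G))
    (hG' : ∀ x ∈ commutator G, α x = x) {g : G}
    (h : g⁻¹ * α g ∈ commutator G) : α g = g := by
  set u := g⁻¹ * α g with hu_def
  have hu : α u = u := hG' _ h
  have hpow : ∀ n : ℕ, (α ^ n) g = g * u ^ n := by
    intro n
    induction n with
    | zero => simp
    | succ n ih =>
      rw [pow_succ', MulAut.mul_apply, ih, map_mul, map_pow, hu]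
      have : α g = g * u := by rw [hu_def]; group
      rw [this, pow_succ']
      group
  have hm : u ^ orderOf α = 1 := by
    have := hpow (orderOf α)
    rw [pow_orderOf_eq_one α] at this
    simpa using this.symm
  have h1 : orderOf u ∣ orderOf α := orderOf_dvd_of_pow_eq_one hm
  have h2 : orderOf u ∣ Nat.card G := orderOf_dvd_natCard u
  have : orderOf u ∣ 1 := hcop ▸ Nat.dvd_gcd h1 h2
  have hu1 : u = 1 := orderOf_eq_one_iff.mp (Nat.dvd_one.mp this)
  have : g⁻¹ * α g = 1 := hu1
  rw [inv_mul_eq_one] at this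
  exact this.symm

/-- Coprime decomposition: every g is c * (y⁻¹ α y) with c fixed by α. -/
lemma aux_decomp (hcop : Nat.Coprime (orderOf α) (Nat.card G))
    (hG' : ∀ x ∈ commutator G, α x = x) (g : G) :
    ∃ c y : G, α c = c ∧ g = c * (y⁻¹ * α y) := by
  classical
  set A := Abelianization G with hA
  set β : A →* A := Abelianization.map α.toMonoidHom with hβdef
  have hβ : ∀ x : G, β (Abelianization.of x) = Abelianization.of (α x) := fun x =>
    Abelianization.map_of α.toMonoidHom x
  set f : A →* A := MonoidHom.mk' (fun a => a⁻¹ * β a) (by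
    intro a b
    simp only [map_mul, mul_inv_rev]
    simp [mul_assoc, mul_comm, mul_left_comm]) with hfdef
  have hfof : ∀ x : G, f (Abelianization.of x) = Abelianization.of (x⁻¹ * α x) := by
    intro x
    simp [hfdef, hβ, map_mul, map_inv]
  have hofsurj : Function.Surjective (Abelianization.of (G := G)) := by
    intro a
    exact Quotient.exists_rep a
  have hker : ∀ x : G, f (Abelianization.of x) = 1 → α x = x := by
    intro x hx
    rw [hfof] at hx
    have : x⁻¹ * α x ∈ commutator G := (QuotientGroup.eq_one_iff _).mp hx
    exact aux_ker α hcop hG' this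
  -- card of A divides card of G, so coprimality transfers
  have hcard : Nat.card A ∣ Nat.card G :=
    Dvd.intro _ (Subgroup.card_eq_card_quotient_mul_card_subgroup (commutator G)).symm
  have hcop' : Nat.Coprime (orderOf α) (Nat.card A) := hcop.coprime_dvd_right hcard
  -- iterates of β
  have hβiter : ∀ (n : ℕ) (x : G), β^[n] (Abelianization.of x) = Abelianization.of ((α ^ n) x) := by
    intro n
    induction n with
    | zero => simp
    | succ n ih =>
      intro x
      rw [Function.iterate_succ_apply', ih, hβ, pow_succ', MulAut.mul_apply]
  have hβm : ∀ a : A, β^[orderOf α] a = a := by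
    intro a
    obtain ⟨x, rfl⟩ := hofsurj a
    rw [hβiter, pow_orderOf_eq_one α]
    rfl
  -- elements in ker f ⊓ range f are trivial
  have hker2 : ∀ s : A, β (f s) = f s → f s = 1 := by
    intro s hr
    set r := f s with hr_def
    have hfix : ∀ n : ℕ, β^[n] r = r := by
      intro n
      induction n with
      | zero => rfl
      | succ n ih => rw [Function.iterate_succ_apply', ih, hr]
    have hstep : ∀ i : ℕ, β^[i + 1] s / β^[i] s = r := by
      intro i
      have : β^[i] r = β^[i + 1] s / β^[i] s := by
        have : r = β s / s := by
          rw [hr_def]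
          show s⁻¹ * β s = β s / s
          rw [div_eq_mul_inv, mul_comm]
        rw [this]
        induction i with
        | zero => simp
        | succ i ih =>
          rw [Function.iterate_succ_apply', ih, map_div,
            ← Function.iterate_succ_apply' β (i + 1) s, ← Function.iterate_succ_apply' β i s]
      rw [← this, hfix]
    have htel : r ^ orderOf α = 1 := by
      have h1 : ∏ i ∈ Finset.range (orderOf α), (fun i => β^[i] s) (i + 1) / (fun i => β^[i] s) i
          = β^[orderOf α] s / β^[0] s := Finset.prod_range_div (fun i => β^[i] s) (orderOf α)
      simp only [hstep] at h1
      rw [Finset.prod_const, Finset.card_range] at h1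
      rw [h1, hβm]
      simp
    have h1 : orderOf r ∣ orderOf α := orderOf_dvd_of_pow_eq_one htel
    have h2 : orderOf r ∣ Nat.card A := orderOf_dvd_natCard r
    have : orderOf r ∣ 1 := hcop' ▸ Nat.dvd_gcd h1 h2
    exact orderOf_eq_one_iff.mp (Nat.dvd_one.mp this)
  -- restriction of f to its range is injective, hence surjective
  set R := f.range with hR
  set f' : R →* R := MonoidHom.codRestrict (f.comp R.subtype) R (fun x => ⟨x, rfl⟩) with hf'
  have hinj : Function.Injective f' := by
    rw [injective_iff_map_eq_one]
    intro x hx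
    have hx1 : f (x : A) = 1 := congrArg Subtype.val hx
    obtain ⟨s, hs⟩ := x.2
    have hβx : β (x : A) = (x : A) := by
      have h2 : ((x : A))⁻¹ * β (x : A) = 1 := hx1
      exact (inv_mul_eq_one.mp h2).symm
    have : β (f s) = f s := by rw [hs]; exact hβx
    have hfs1 : f s = 1 := hker2 s this
    exact Subtype.ext (hs.symm.trans hfs1)
  have hsurj : Function.Surjective f' := Finite.injective_iff_surjective.mp hinj
  -- decompose of g
  obtain ⟨x, hx⟩ := hsurj ⟨f (Abelianization.of g), ⟨Abelianization.of g, rfl⟩⟩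
  have hx' : f (x : A) = f (Abelianization.of g) := congrArg Subtype.val hx
  obtain ⟨s, hs⟩ := x.2
  obtain ⟨y, rfl⟩ := hofsurj s
  -- c := g * (y⁻¹ * α y)⁻¹
  refine ⟨g * (y⁻¹ * α y)⁻¹, y, ?_, by group⟩
  apply hker
  have hofc : Abelianization.of (g * (y⁻¹ * α y)⁻¹)
      = Abelianization.of g * (f (Abelianization.of y))⁻¹ := by
    rw [hfof, map_mul, map_inv]
  rw [hfof]
  rw [← hfof]
  rw [hofc, map_mul, map_inv, hs, hx']
  simp
end Aux

/-- If a finite group `G` admits a coprime automorphism `α` with `G' ≤ C_G(α)`, and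
`Z` is the center of `[G,α]` (elements of `[G,α]` commuting with all of `[G,α]`),
then `[Z,α] ≤ Z(G)`. -/
theorem stmt_7 {G : Type*} [Group G] [Finite G] (α : MulAut G)
    (hcop : Nat.Coprime (orderOf α) (Nat.card G))
    (hG' : ∀ x ∈ commutator G, α x = x) :
    Subgroup.closure {y : G |
        ∃ z ∈ Subgroup.closure {w : G | ∃ g : G, w = g⁻¹ * α g},
          (∀ x ∈ Subgroup.closure {w : G | ∃ g : G, w = g⁻¹ * α g}, Commute z x) ∧
            y = z⁻¹ * α z}
      ≤ Subgroup.center G := by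
  set S : Set G := {w : G | ∃ g : G, w = g⁻¹ * α g} with hS
  set H := Subgroup.closure S with hH
  -- α.symm maps H into H
  have hsymm : ∀ x ∈ H, α.symm x ∈ H := by
    intro x hx
    induction hx using Subgroup.closure_induction with
    | mem w hw =>
      obtain ⟨g, rfl⟩ := hw
      apply Subgroup.subset_closure
      exact ⟨α.symm g, by simp⟩
    | one => simpa using H.one_mem
    | mul a b _ _ ha hb => rw [map_mul]; exact H.mul_mem ha hb
    | inv a _ ha => rw [map_inv]; exact H.inv_mem ha
  rw [Subgroup.closure_le]
  rintro t ⟨z, hzH, hzcomm, rfl⟩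
  simp only [SetLike.mem_coe]
  rw [Subgroup.mem_center_iff]
  intro g
  obtain ⟨c, y, hc, rfl⟩ := aux_decomp α hcop hG' g
  have hu : y⁻¹ * α y ∈ H := Subgroup.subset_closure ⟨y, rfl⟩
  have h1 : Commute (z⁻¹ * α z) c := (aux_fix_commute α hG' hc z).symm
  have h2 : Commute z (y⁻¹ * α y) := hzcomm _ hu
  have h3 : Commute (α z) (y⁻¹ * α y) := by
    have h4 : Commute z (α.symm (y⁻¹ * α y)) := hzcomm _ (hsymm _ hu)
    have := h4.map (α : G →* G)
    simpa using this
  have h5 : Commute (z⁻¹ * α z) (y⁻¹ * α y) := (h2.inv_left).mul_left h3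
  exact ((h1.mul_right h5).symm).eq
end

section
/- Let G = G₁ ⊕ G₂ ⊕ ⋯ ⊕ G_m be a finite abelian group written as a direct sum of m mutually isomorphic subgroups G_i, admitting an automorphism α of order m with gcd(m,|G|) = 1 that cyclically permutes the summands (G_i^α = G_{i+1 mod m}). Then the index [G : [G,α]] equals |G₁|. -/
/-- Let a finite abelian group `G` be the direct sum of `m` mutually isomorphic
subgroups `G₀, …, G_{m-1}` cyclically permuted by an automorphism `α` of order `m`
coprime to `|G|`. Then the index of `[G,α]` in `G` equals `|G₀|`. -/
theorem stmt_8 {G : Type*} [AddCommGroup G] [Finite G] (m : ℕ) [NeZero m]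
    (Gsub : Fin m → AddSubgroup G)
    (hiso : ∀ i : Fin m, Nonempty (Gsub i ≃+ Gsub 0))
    (hsup : ⨆ i, Gsub i = ⊤)
    (hind : iSupIndep Gsub)
    (α : AddAut G) (hord : addOrderOf α = m)
    (hcop : Nat.Coprime m (Nat.card G))
    (hperm : ∀ i : Fin m, (Gsub i).map α.toAddMonoidHom = Gsub (i + 1)) :
    (AddSubgroup.closure {x : G | ∃ g : G, x = -g + α g}).index
      = Nat.card (Gsub 0) := by
  classical
  -- the endomorphism `g ↦ α g - g`
  set f : G →+ G := AddMonoidHom.mk' (fun g => α g - g)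
    (by intro a b; simp only [map_add]; abel) with hf
  have hfapp : ∀ g, f g = α g - g := fun g => rfl
  have hset : {x : G | ∃ g : G, x = -g + α g} = (f.range : Set G) := by
    ext x
    simp only [Set.mem_setOf_eq, SetLike.mem_coe, AddMonoidHom.mem_range, hfapp]
    constructor
    · rintro ⟨g, rfl⟩; exact ⟨g, by abel⟩
    · rintro ⟨g, rfl⟩; exact ⟨g, by abel⟩
  rw [hset, AddSubgroup.closure_eq]
  -- index of the range equals the cardinality of the kernel
  have hcardpos : 0 < Nat.card f.range := Nat.card_pos
  have h1 : f.range.index * Nat.card f.range = Nat.card G := f.range.index_mul_card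
  have h2 : Nat.card G = Nat.card (G ⧸ f.ker) * Nat.card f.ker :=
    AddSubgroup.card_eq_card_quotient_mul_card_addSubgroup f.ker
  have h3 : Nat.card (G ⧸ f.ker) = Nat.card f.range :=
    Nat.card_congr (QuotientAddGroup.quotientKerEquivRange f).toEquiv
  have hidx : f.range.index = Nat.card f.ker := by
    have := h1.trans (h2.trans (by rw [h3]))
    exact Nat.eq_of_mul_eq_mul_right hcardpos (by linarith [this])
  rw [hidx]
  -- now show `Nat.card f.ker = Nat.card (Gsub 0)`
  -- kernel = fixed points
  have hker : ∀ g : G, g ∈ f.ker ↔ α g = g := by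
    intro g
    rw [AddMonoidHom.mem_ker, hfapp, sub_eq_zero]
  -- `α ^ m = 1`
  have hαm : m • α = 0 := hord ▸ addOrderOf_nsmul_eq_zero α
  -- powers of α move `Gsub 0` around
  open Fin.NatCast Fin.CommRing in
  have hmem : ∀ (n : ℕ) (x : G), x ∈ Gsub 0 → (n • α) x ∈ Gsub ((n : Fin m)) := by
    intro n
    induction n with
    | zero => intro x hx; simpa using hx
    | succ n ih =>
      intro x hx
      have h1 : (n • α) x ∈ Gsub ((n : Fin m)) := ih x hx
      have h2 : α ((n • α) x) ∈ (Gsub ((n : Fin m))).map α.toAddMonoidHom :=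
        ⟨(n • α) x, h1, rfl⟩
      rw [hperm] at h2
      have h3 : ((n + 1 : ℕ) : Fin m) = (n : Fin m) + 1 := by push_cast; ring
      have h4 : ((n + 1) • α) x = α ((n • α) x) := by
        rw [succ_nsmul']; rfl
      rw [h3, h4]
      exact h2
  -- more generally, powers of α move each `Gsub i` around
  have hmem' : ∀ (i : Fin m) (x : G), x ∈ Gsub i → α x ∈ Gsub (i + 1) := by
    intro i x hx
    have : α x ∈ (Gsub i).map α.toAddMonoidHom := ⟨x, hx, rfl⟩
    rwa [hperm] at this
  -- zero-sum consequence of independence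
  have hzero : ∀ c : (i : Fin m) → Gsub i, ∑ i, (c i : G) = 0 → ∀ i, c i = 0 := by
    intro c hc
    have hinj := hind.dfinsuppSumAddHom_injective
    have h0 : DFinsupp.equivFunOnFintype.symm c = 0 := by
      apply hinj
      rw [map_zero, DFinsupp.sumAddHom_apply, DFinsupp.sum_eq_sum_fintype]
      · simpa [DFinsupp.equivFunOnFintype] using hc
      · intro i; simp
    have : c = 0 := by
      have := congrArg DFinsupp.equivFunOnFintype h0
      simpa [DFinsupp.equivFunOnFintype] using this
    intro i; rw [this]; rfl
  -- existence of decomposition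
  have hex : ∀ g : G, ∃ c : (i : Fin m) → Gsub i, ∑ i, (c i : G) = g := by
    intro g
    have hg : g ∈ ⨆ i, Gsub i := hsup ▸ AddSubgroup.mem_top g
    refine AddSubgroup.iSup_induction Gsub (C := fun y => ∃ c : (i : Fin m) → Gsub i, ∑ i, (c i : G) = y) hg ?_ ?_ ?_
    · intro i x hx
      refine ⟨fun j => if h : j = i then ⟨x, h ▸ hx⟩ else 0, ?_⟩
      rw [Finset.sum_eq_single i]
      · simp
      · intro j _ hj; simp [hj]
      · intro h; exact absurd (Finset.mem_univ i) h
    · exact ⟨0, by simp⟩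
    · rintro x y ⟨c₁, hc₁⟩ ⟨c₂, hc₂⟩
      exact ⟨c₁ + c₂, by simp [Finset.sum_add_distrib, hc₁, hc₂]⟩
  -- the map from `Gsub 0` to the kernel
  have hφmem : ∀ x : Gsub 0, (∑ i : Fin m, ((i : ℕ) • α) (x : G)) ∈ f.ker := by
    intro x
    rw [hker, map_sum]
    -- reindex the sum
    have key : ∀ i : Fin m, α (((i : ℕ) • α) (x : G)) = (((i + 1 : Fin m) : ℕ) • α) (x : G) := by
      intro i
      have h1 : α (((i : ℕ) • α) (x : G)) = (((i : ℕ) + 1) • α) (x : G) := by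
        rw [succ_nsmul']; rfl
      have h2 : ((i + 1 : Fin m) : ℕ) = ((i : ℕ) + 1) % m := by
        simp [Fin.add_def, Nat.add_mod]
      rw [h1, h2, ← mod_addOrderOf_nsmul (n := (i : ℕ) + 1), hord]
    rw [Finset.sum_congr rfl fun i _ => key i]
    exact Fintype.sum_equiv (Equiv.addRight (1 : Fin m)) _ _ (fun i => rfl)
  set φ : Gsub 0 → f.ker := fun x => ⟨∑ i : Fin m, ((i : ℕ) • α) (x : G), hφmem x⟩ with hφ
  have hbij : Function.Bijective φ := by
    constructor
    · intro x y hxy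
      have hsum : ∑ i : Fin m, (((i : ℕ) • α) ((x : G) - y)) = 0 := by
        have := Subtype.ext_iff.mp hxy
        simp only [hφ] at this
        simp [map_sub, Finset.sum_sub_distrib, this]
      set c : (i : Fin m) → Gsub i := fun i =>
        ⟨((i : ℕ) • α) ((x : G) - y), by
          have := hmem (i : ℕ) ((x : G) - y) (sub_mem x.2 y.2)
          simpa [Fin.cast_val_eq_self] using this⟩ with hc
      have h0 := hzero c (by simpa [hc] using hsum) 0
      have : (x : G) - y = 0 := by
        have := Subtype.ext_iff.mp h0
        simpa [hc] using this
      exact Subtype.ext (by linear_combination (norm := abel) this)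
    · rintro ⟨g, hg⟩
      rw [hker] at hg
      obtain ⟨c, hc⟩ := hex g
      -- c i = α (c (i - 1))
      have hrec : ∀ i : Fin m, (c i : G) = α (c (i - 1)) := by
        set d : (i : Fin m) → Gsub i := fun i =>
          ⟨(c i : G) - α (c (i - 1)), by
            have := hmem' (i - 1) (c (i - 1)) (c (i - 1)).2
            rw [sub_add_cancel] at this
            exact sub_mem (c i).2 this⟩ with hd
        have hsum : ∑ i, (d i : G) = 0 := by
          have h1 : ∑ i : Fin m, α ((c (i - 1) : G)) = ∑ i : Fin m, α ((c i : G)) :=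
            Fintype.sum_equiv (Equiv.subRight (1 : Fin m)) _ _ (fun i => rfl)
          have h2 : ∑ i : Fin m, α ((c i : G)) = g := by
            rw [← map_sum, hc, hg]
          simp only [hd, Finset.sum_sub_distrib, h1, h2, hc, sub_self]
        intro i
        have h5 : (c i : G) - α (c (i - 1)) = 0 := by
          simpa [hd] using Subtype.ext_iff.mp (hzero d hsum i)
        exact sub_eq_zero.mp h5
      -- hence c n = α^n (c 0)
      open Fin.NatCast Fin.CommRing in
      have hpow : ∀ n : ℕ, (c ((n : Fin m)) : G) = (n • α) ((c 0 : G)) := by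
        intro n
        induction n with
        | zero => rw [Nat.cast_zero]; simp
        | succ n ih =>
          have h1 : ((n + 1 : ℕ) : Fin m) = (n : Fin m) + 1 := by push_cast; ring
          rw [h1, hrec ((n : Fin m) + 1), add_sub_cancel_right, ih]
          rw [succ_nsmul']; rfl
      refine ⟨⟨(c 0 : G), (c 0).2⟩, ?_⟩
      apply Subtype.ext
      simp only [hφ]
      rw [← hc]
      refine Finset.sum_congr rfl fun i _ => ?_
      rw [← hpow (i : ℕ), Fin.cast_val_eq_self]
  rw [Nat.card_congr (Equiv.ofBijective φ hbij).symm]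
end

section
/- Let m ≥ 2 and let G = G₁ ∘ G₂ ∘ ⋯ ∘ G_m be a finite group which is a central product of isomorphic extra-special subgroups G_i of order p³ (p prime). Suppose G admits a coprime automorphism α of order m cyclically permuting the factors G_i and satisfying G' ≤ C_G(α). Then [G,α] is extra-special and has index p² in G. -/
/-- A group is extra-special (for the prime `p`) if it is a `p`-group whose derived
subgroup and center coincide and have order `p`. -/
def IsExtraspecial (p : ℕ) (H : Type*) [Group H] : Prop :=
  IsPGroup p H ∧ commutator H = Subgroup.center H ∧ Nat.card (Subgroup.center H) = p

open Subgroup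
open scoped commutatorElement
open Fin.NatCast


section Helpers
variable {G : Type*} [Group G]

private lemma cc_mul_left (hc : ∀ x y : G, ⁅x, y⁆ ∈ Subgroup.center G) (a b c : G) :
    ⁅a * b, c⁆ = ⁅a, c⁆ * ⁅b, c⁆ := by
  have h1 : ⁅a * b, c⁆ = a * ⁅b, c⁆ * a⁻¹ * ⁅a, c⁆ := by
    simp only [commutatorElement_def]; group
  have h2 : a * ⁅b, c⁆ = ⁅b, c⁆ * a := Subgroup.mem_center_iff.mp (hc b c) a
  have h3 : ⁅a, c⁆ * ⁅b, c⁆ = ⁅b, c⁆ * ⁅a, c⁆ := Subgroup.mem_center_iff.mp (hc b c) ⁅a, c⁆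
  rw [h1, h2, h3]; group

private lemma cc_mul_right (hc : ∀ x y : G, ⁅x, y⁆ ∈ Subgroup.center G) (a b c : G) :
    ⁅a, b * c⁆ = ⁅a, b⁆ * ⁅a, c⁆ := by
  have h1 : ⁅a, b * c⁆ = ⁅a, b⁆ * (b * ⁅a, c⁆ * b⁻¹) := by
    simp only [commutatorElement_def]; group
  have h2 : b * ⁅a, c⁆ = ⁅a, c⁆ * b := Subgroup.mem_center_iff.mp (hc a c) b
  rw [h1, h2]; group

private lemma cc_inv_left (hc : ∀ x y : G, ⁅x, y⁆ ∈ Subgroup.center G) (a b : G) :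
    ⁅a⁻¹, b⁆ = ⁅a, b⁆⁻¹ := by
  have h1 : ⁅a⁻¹, b⁆ = a⁻¹ * (⁅a, b⁆⁻¹ * a) := by
    simp only [commutatorElement_def]; group
  have h2 : a * ⁅a, b⁆⁻¹ = ⁅a, b⁆⁻¹ * a :=
    Subgroup.mem_center_iff.mp ((Subgroup.center G).inv_mem (hc a b)) a
  rw [h1, ← h2]; group

private lemma cc_inv_right (hc : ∀ x y : G, ⁅x, y⁆ ∈ Subgroup.center G) (a b : G) :
    ⁅a, b⁻¹⁆ = ⁅a, b⁆⁻¹ := by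
  have h1 : ⁅a, b⁻¹⁆ = b⁻¹ * (⁅a, b⁆⁻¹ * b) := by
    simp only [commutatorElement_def]; group
  have h2 : b * ⁅a, b⁆⁻¹ = ⁅a, b⁆⁻¹ * b :=
    Subgroup.mem_center_iff.mp ((Subgroup.center G).inv_mem (hc a b)) b
  rw [h1, ← h2]; group

end Helpers

/-- Let `m ≥ 2` and let `G = G₀ ∘ G₁ ∘ ⋯ ∘ G_{m-1}` be a finite group which is a
central product of isomorphic extra-special subgroups of order `p³`. If `G` admits a
coprime automorphism `α` of order `m` cyclically permuting the factors with
`G' ≤ C_G(α)`, then `[G,α]` is extra-special of index `p²` in `G`. -/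
theorem stmt_10 {G : Type*} [Group G] [Finite G] (p m : ℕ) (hp : p.Prime)
    (hm : 2 ≤ m) [NeZero m]
    (Gsub : Fin m → Subgroup G)
    (hextra : ∀ i : Fin m, IsExtraspecial p (Gsub i))
    (hcard : ∀ i : Fin m, Nat.card (Gsub i) = p ^ 3)
    (hiso : ∀ i : Fin m, Nonempty ((Gsub i) ≃* (Gsub 0)))
    (hsup : ⨆ i, Gsub i = ⊤)
    (hcomm : ∀ i j : Fin m, i ≠ j → ∀ x ∈ Gsub i, ∀ y ∈ Gsub j, Commute x y)
    (hcent : ∀ i j : Fin m, i ≠ j →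
      Gsub i ⊓ Gsub j = Gsub i ⊓ Subgroup.centralizer (Gsub i : Set G))
    (α : MulAut G) (hord : orderOf α = m)
    (hcop : Nat.Coprime m (Nat.card G))
    (hperm : ∀ i : Fin m, (Gsub i).map α.toMonoidHom = Gsub (i + 1))
    (hfix : ∀ x ∈ commutator G, α x = x) :
    IsExtraspecial p (Subgroup.closure {y : G | ∃ g : G, y = g⁻¹ * α g}) ∧
      (Subgroup.closure {y : G | ∃ g : G, y = g⁻¹ * α g}).index = p ^ 2 := by
  set N : Subgroup G := Subgroup.closure {y : G | ∃ g : G, y = g⁻¹ * α g} with hNdef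
  set Z : Subgroup G := Gsub 0 ⊓ Subgroup.centralizer (Gsub 0 : Set G) with hZdef
  -- Fin m facts
  have hmpos : 0 < m := by omega
  have hv1 : ((1 : Fin m) : ℕ) = 1 := by
    rw [Fin.val_one']; exact Nat.mod_eq_of_lt (by omega)
  have h01 : (0 : Fin m) ≠ 1 := by
    intro e; have := congrArg Fin.val e; rw [Fin.val_zero, hv1] at this; omega
  -- all the "local centers" coincide
  have hZi : ∀ i : Fin m, Gsub i ⊓ Subgroup.centralizer (Gsub i : Set G) = Z := by
    intro i
    rcases eq_or_ne i 0 with rfl | hi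
    · rfl
    · rw [← hcent i 0 hi, inf_comm, hZdef, ← hcent 0 i (Ne.symm hi)]
  have hZle : ∀ i : Fin m, Z ≤ Gsub i := by
    intro i; rw [← hZi i]; exact inf_le_left
  -- the image of the center of each factor is Z
  have hmapcenter : ∀ i : Fin m,
      (Subgroup.center ↥(Gsub i)).map (Gsub i).subtype = Z := by
    intro i
    rw [← hZi i]
    ext x
    constructor
    · rintro ⟨⟨y, hy⟩, hyc, rfl⟩
      refine ⟨hy, Subgroup.mem_centralizer_iff.mpr ?_⟩
      intro h hh
      have := Subgroup.mem_center_iff.mp hyc ⟨h, hh⟩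
      exact congrArg Subtype.val this
    · rintro ⟨hx, hxc⟩
      refine ⟨⟨x, hx⟩, Subgroup.mem_center_iff.mpr ?_, rfl⟩
      rintro ⟨h, hh⟩
      exact Subtype.ext (Subgroup.mem_centralizer_iff.mp hxc h hh)
  have hcardZ : Nat.card Z = p := by
    rw [← hmapcenter 0]
    rw [← Nat.card_congr
      ((Subgroup.center ↥(Gsub 0)).equivMapOfInjective (Gsub 0).subtype
        (Gsub 0).subtype_injective).toEquiv]
    exact (hextra 0).2.2
  -- Z is central in G
  have hZcenter : Z ≤ Subgroup.center G := by
    intro z hz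
    rw [Subgroup.mem_center_iff]
    intro g
    have hg : g ∈ ⨆ i, Gsub i := by rw [hsup]; exact Subgroup.mem_top g
    refine Subgroup.iSup_induction (C := fun g => g * z = z * g) Gsub hg ?_ (by simp) ?_
    · intro i x hx
      show x * z = z * x
      rcases eq_or_ne i 0 with rfl | hi
      · exact (Subgroup.mem_centralizer_iff.mp hz.2 x hx)
      · have : Commute z x := hcomm 0 i (Ne.symm hi) z hz.1 x hx
        exact this.symm.eq
    · intro x y hx hy
      show x * y * z = z * (x * y)
      rw [mul_assoc, hy, ← mul_assoc, hx, mul_assoc]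
  haveI hZnormal : Z.Normal := by
    constructor
    intro z hz g
    have h := Subgroup.mem_center_iff.mp (hZcenter hz) g
    rw [h, mul_assoc, mul_inv_cancel, mul_one]
    exact hz
  -- commutators within one factor land in Z
  have hinner : ∀ i : Fin m, ∀ g ∈ Gsub i, ∀ h ∈ Gsub i, ⁅g, h⁆ ∈ Z := by
    intro i g hg h hh
    have hmem : (⁅(⟨g, hg⟩ : ↥(Gsub i)), (⟨h, hh⟩ : ↥(Gsub i))⁆ : ↥(Gsub i)) ∈
        Subgroup.center ↥(Gsub i) := by
      rw [← (hextra i).2.1]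
      rw [_root_.commutator_def]
      exact Subgroup.commutator_mem_commutator (Subgroup.mem_top _) (Subgroup.mem_top _)
    have : ⁅g, h⁆ ∈ (Subgroup.center ↥(Gsub i)).map (Gsub i).subtype := by
      refine ⟨_, hmem, ?_⟩
      simp [commutatorElement_def]
    rwa [hmapcenter i] at this
  -- all commutators in G land in Z
  have hcommZ : ∀ x y : G, ⁅x, y⁆ ∈ Z := by
    have key : ∀ i : Fin m, ∀ g ∈ Gsub i, ∀ y : G, ⁅g, y⁆ ∈ Z := by
      intro i g hg y
      have hy : y ∈ ⨆ j, Gsub j := by rw [hsup]; exact Subgroup.mem_top y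
      refine Subgroup.iSup_induction (C := fun y => ⁅g, y⁆ ∈ Z) Gsub hy ?_ ?_ ?_
      · intro j x hx
        rcases eq_or_ne j i with rfl | hj
        · exact hinner j g hg x hx
        · have : ⁅g, x⁆ = 1 :=
            commutatorElement_eq_one_iff_commute.mpr (hcomm i j (Ne.symm hj) g hg x hx)
          rw [this]; exact Z.one_mem
      · show ⁅g, (1 : G)⁆ ∈ Z
        have : ⁅g, (1 : G)⁆ = 1 := by simp [commutatorElement_def]
        rw [this]; exact Z.one_mem
      · intro x y hx hy
        show ⁅g, x * y⁆ ∈ Z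
        have hid : ⁅g, x * y⁆ = ⁅g, x⁆ * (x * ⁅g, y⁆ * x⁻¹) := by
          simp only [commutatorElement_def]; group
        rw [hid]
        exact Z.mul_mem hx (hZnormal.conj_mem _ hy x)
    intro x y
    have hx : x ∈ ⨆ j, Gsub j := by rw [hsup]; exact Subgroup.mem_top x
    refine Subgroup.iSup_induction (C := fun x => ⁅x, y⁆ ∈ Z) Gsub hx ?_ ?_ ?_
    · intro j x hx; exact key j x hx y
    · show ⁅(1 : G), y⁆ ∈ Z
      have : ⁅(1 : G), y⁆ = 1 := by simp [commutatorElement_def]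
      rw [this]; exact Z.one_mem
    · intro a b ha hb
      show ⁅a * b, y⁆ ∈ Z
      have hid : ⁅a * b, y⁆ = (a * ⁅b, y⁆ * a⁻¹) * ⁅a, y⁆ := by
        simp only [commutatorElement_def]; group
      rw [hid]
      exact Z.mul_mem (hZnormal.conj_mem _ hb a) ha
  have hcentral : ∀ x y : G, ⁅x, y⁆ ∈ Subgroup.center G := fun x y => hZcenter (hcommZ x y)
  have hcommle : commutator G ≤ Z := by
    rw [_root_.commutator_def]
    exact Subgroup.commutator_le.mpr fun g₁ _ g₂ _ => hcommZ g₁ g₂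
    -- a noncommuting pair in Gsub 0
  obtain ⟨g, hg, h, hh, hgh1⟩ : ∃ g ∈ Gsub 0, ∃ h ∈ Gsub 0, ⁅g, h⁆ ≠ 1 := by
    by_contra hcon
    push_neg at hcon
    have hbot : _root_.commutator ↥(Gsub 0) = ⊥ := by
      rw [_root_.commutator_def]
      rw [eq_bot_iff]
      refine Subgroup.commutator_le.mpr ?_
      intro a _ b _
      rw [Subgroup.mem_bot]
      have : ((⁅a, b⁆ : ↥(Gsub 0)) : G) = ⁅(a : G), (b : G)⁆ := by
        simp [commutatorElement_def]
      have h2 := hcon (a : G) a.2 (b : G) b.2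
      exact Subtype.ext (by rw [this, h2]; rfl)
    have := (hextra 0).2.1
    rw [hbot] at this
    have hc := (hextra 0).2.2
    rw [← this] at hc
    rw [Subgroup.card_bot] at hc
    have := hp.two_le
    omega
  -- basic facts about α moving the factors
  have halpha : ∀ i : Fin m, ∀ u ∈ Gsub i, α u ∈ Gsub (i + 1) := by
    intro i u hu
    rw [← hperm i]
    exact ⟨u, hu, rfl⟩
  have hghZ : ⁅g, h⁆ ∈ Z := hinner 0 g hg h hh
  have hghcomm : ⁅g, h⁆ ∈ _root_.commutator G := by
    rw [_root_.commutator_def]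
    exact Subgroup.commutator_mem_commutator (Subgroup.mem_top _) (Subgroup.mem_top _)
  have hfixgh : α ⁅g, h⁆ = ⁅g, h⁆ := hfix _ hghcomm
  have halphagh : ⁅α g, α h⁆ = ⁅g, h⁆ := by
    have hmc := map_commutatorElement α.toMonoidHom g h
    simp only [MulEquiv.coe_toMonoidHom] at hmc
    rw [← hmc, hfixgh]
  -- the key pair of elements of N whose commutator generates Z
  obtain ⟨a, ha, b, hb, habZ, hab1⟩ :
      ∃ a, a ∈ N ∧ ∃ b, b ∈ N ∧ ⁅a, b⁆ ∈ Z ∧ ⁅a, b⁆ ≠ 1 := by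
    have hg1 : α g ∈ Gsub 1 := by have := halpha 0 g hg; rwa [zero_add] at this
    have hh1 : α h ∈ Gsub 1 := by have := halpha 0 h hh; rwa [zero_add] at this
    rcases eq_or_lt_of_le hm with hm2 | hm3
    · -- m = 2, so p is odd
      have hpne2 : p ≠ 2 := by
        intro hp2
        have hdvd : (2 : ℕ) ∣ Nat.card G := by
          have h' := Subgroup.card_subgroup_dvd_card Z
          rwa [hcardZ, hp2] at h'
        have h2 : Nat.Coprime 2 (Nat.card G) := by rw [hm2]; exact hcop
        have := Nat.Coprime.eq_one_of_dvd h2 hdvd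
        omega
      refine ⟨g⁻¹ * α g, Subgroup.subset_closure ⟨g, rfl⟩,
        h⁻¹ * α h, Subgroup.subset_closure ⟨h, rfl⟩, ?_, ?_⟩
      · exact hcommZ _ _
      · have e1 : ⁅g⁻¹ * α g, h⁻¹ * α h⁆ = ⁅g, h⁆ ^ 2 := by
          rw [cc_mul_left hcentral, cc_mul_right hcentral, cc_mul_right hcentral,
            cc_inv_left hcentral, cc_inv_left hcentral, cc_inv_right hcentral,
            cc_inv_right hcentral]
          have c1 : ⁅g, α h⁆ = 1 := commutatorElement_eq_one_iff_commute.mpr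
            (hcomm 0 1 h01 g hg (α h) hh1)
          have c2 : ⁅α g, h⁆ = 1 := commutatorElement_eq_one_iff_commute.mpr
            (hcomm 1 0 (Ne.symm h01) (α g) hg1 h hh)
          rw [c1, c2, halphagh, pow_two]
          group
        rw [e1]
        intro hsq
        have horder : orderOf ⁅g, h⁆ = p := by
          have hdvd : orderOf ⁅g, h⁆ ∣ p := by
            rw [← hcardZ]
            exact Subgroup.orderOf_dvd_natCard Z hghZ
          rcases (Nat.Prime.eq_one_or_self_of_dvd hp _ hdvd) with h1 | h1
          · exact absurd (orderOf_eq_one_iff.mp h1) hgh1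
          · exact h1
        have : orderOf ⁅g, h⁆ ∣ 2 := orderOf_dvd_of_pow_eq_one hsq
        rw [horder] at this
        have hple := Nat.le_of_dvd (by norm_num) this
        have := hp.two_le
        omega
    · -- m ≥ 3
      have hv2 : ((1 : Fin m) + 1).val = 2 := by
        rw [Fin.val_add, hv1]
        exact Nat.mod_eq_of_lt (by omega)
      have h02 : (0 : Fin m) ≠ 1 + 1 := by
        intro e; have := congrArg Fin.val e; rw [Fin.val_zero, hv2] at this; omega
      have h12 : (1 : Fin m) ≠ 1 + 1 := by
        intro e; have := congrArg Fin.val e; rw [hv1, hv2] at this; omega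
      have hh2 : α (α h) ∈ Gsub (1 + 1) := halpha 1 (α h) hh1
      refine ⟨g⁻¹ * α g, Subgroup.subset_closure ⟨g, rfl⟩,
        (α h)⁻¹ * α (α h), Subgroup.subset_closure ⟨α h, rfl⟩, ?_, ?_⟩
      · exact hcommZ _ _
      · have e1 : ⁅g⁻¹ * α g, (α h)⁻¹ * α (α h)⁆ = ⁅g, h⁆⁻¹ := by
          rw [cc_mul_left hcentral, cc_mul_right hcentral, cc_mul_right hcentral,
            cc_inv_left hcentral, cc_inv_left hcentral, cc_inv_right hcentral,
            cc_inv_right hcentral]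
          have c1 : ⁅g, α h⁆ = 1 := commutatorElement_eq_one_iff_commute.mpr
            (hcomm 0 1 h01 g hg (α h) hh1)
          have c2 : ⁅g, α (α h)⁆ = 1 := commutatorElement_eq_one_iff_commute.mpr
            (hcomm 0 (1 + 1) h02 g hg (α (α h)) hh2)
          have c3 : ⁅α g, α (α h)⁆ = 1 := commutatorElement_eq_one_iff_commute.mpr
            (hcomm 1 (1 + 1) h12 (α g) hg1 (α (α h)) hh2)
          rw [c1, c2, c3, halphagh]
          group
        rw [e1]
        exact inv_ne_one.mpr hgh1
  -- Z is cyclic generated by ⁅a, b⁆, and Z ≤ N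
  have horderab : orderOf ⁅a, b⁆ = p := by
    have hdvd : orderOf ⁅a, b⁆ ∣ p := by
      rw [← hcardZ]
      exact Subgroup.orderOf_dvd_natCard Z habZ
    rcases (Nat.Prime.eq_one_or_self_of_dvd hp _ hdvd) with h1 | h1
    · exact absurd (orderOf_eq_one_iff.mp h1) hab1
    · exact h1
  have hZzp : Subgroup.zpowers ⁅a, b⁆ = Z := by
    refine Subgroup.eq_of_le_of_card_ge (Subgroup.zpowers_le.mpr habZ) ?_
    rw [hcardZ, Nat.card_zpowers, horderab]
  have habN : ⁅a, b⁆ ∈ N := by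
    exact N.mul_mem (N.mul_mem (N.mul_mem ha hb) (N.inv_mem ha)) (N.inv_mem hb)
  have hZN : Z ≤ N := by
    rw [← hZzp]
    exact Subgroup.zpowers_le.mpr habN
  have habcomm : ⁅a, b⁆ ∈ _root_.commutator G := by
    rw [_root_.commutator_def]
    exact Subgroup.commutator_mem_commutator (Subgroup.mem_top _) (Subgroup.mem_top _)
  have hZcommutator : _root_.commutator G = Z := by
    refine le_antisymm hcommle ?_
    rw [← hZzp]
    exact Subgroup.zpowers_le.mpr habcomm
  have hfixZ : ∀ z ∈ Z, α z = z := by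
    intro z hz
    exact hfix z (by rw [hZcommutator]; exact hz)
  have hfixZk : ∀ (k : ℕ), ∀ z ∈ Z, (α ^ k) z = z := by
    intro k
    induction k with
    | zero => intro z hz; simp
    | succ k ih =>
      intro z hz
      rw [pow_succ, MulAut.mul_apply, hfixZ z hz]
      exact ih z hz
    -- quotient machinery
  set πm : G →* G ⧸ Z := QuotientGroup.mk' Z with hπdef
  have hπsurj : Function.Surjective πm := QuotientGroup.mk'_surjective Z
  have hkerπ : πm.ker = Z := QuotientGroup.ker_mk' Z
  have hπone : ∀ x : G, πm x = 1 ↔ x ∈ Z := fun x => QuotientGroup.eq_one_iff x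
  have hQc : ∀ a b : G ⧸ Z, a * b = b * a := by
    intro a b
    obtain ⟨x, rfl⟩ := hπsurj a
    obtain ⟨y, rfl⟩ := hπsurj b
    rw [← map_mul, ← map_mul]
    have h1 : (x * y) * (y * x)⁻¹ ∈ Z := by
      have hx : (x * y) * (y * x)⁻¹ = ⁅x, y⁆ := by group
      rw [hx]; exact hcommZ x y
    have h2 : πm ((x * y) * (y * x)⁻¹) = 1 := (hπone _).mpr h1
    rw [map_mul, map_inv] at h2
    rw [← mul_inv_eq_one]
    exact h2
  letI instCG : CommGroup (G ⧸ Z) := { (inferInstance : Group (G ⧸ Z)) with mul_comm := hQc }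
  -- the induced endomorphisms of the quotient
  have hcompat : ∀ k : ℕ, Z ≤ Z.comap (α ^ k : MulAut G).toMonoidHom := by
    intro k z hz
    simp only [Subgroup.mem_comap, MulEquiv.coe_toMonoidHom]
    rw [hfixZk k z hz]
    exact hz
  set A : ℕ → (G ⧸ Z) →* (G ⧸ Z) :=
    fun k => QuotientGroup.map Z Z (α ^ k : MulAut G).toMonoidHom (hcompat k) with hAdef
  have hA : ∀ (k : ℕ) (x : G), A k (πm x) = πm ((α ^ k) x) := by
    intro k x; rfl
  have hA0 : ∀ q : G ⧸ Z, A 0 q = q := by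
    intro q; obtain ⟨x, rfl⟩ := hπsurj q
    rw [hA]
    simp
  have hAm : ∀ q : G ⧸ Z, A m q = q := by
    intro q; obtain ⟨x, rfl⟩ := hπsurj q
    rw [hA, ← hord, pow_orderOf_eq_one α]
    rfl
  have hAsucc : ∀ (k : ℕ) (q : G ⧸ Z), A (k + 1) q = A k (A 1 q) := by
    intro k q; obtain ⟨x, rfl⟩ := hπsurj q
    rw [hA, hA, hA, pow_succ, MulAut.mul_apply, pow_one]
  have hAsucc' : ∀ (k : ℕ) (q : G ⧸ Z), A (k + 1) q = A 1 (A k q) := by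
    intro k q; obtain ⟨x, rfl⟩ := hπsurj q
    rw [hA, hA, hA, pow_succ', MulAut.mul_apply, pow_one]
  -- the norm map ν and the "difference" map D
  set ν : (G ⧸ Z) →* (G ⧸ Z) := ∏ k ∈ Finset.range m, A k with hνdef
  have hν : ∀ q : G ⧸ Z, ν q = ∏ k ∈ Finset.range m, A k q := by
    intro q
    rw [hνdef]
    exact MonoidHom.finset_prod_apply _ _ _
  set D : (G ⧸ Z) →* (G ⧸ Z) := (A 1) * (MonoidHom.id (G ⧸ Z))⁻¹ with hDdef
  have hD : ∀ q : G ⧸ Z, D q = A 1 q * q⁻¹ := by intro q; rfl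
  have hDmk : ∀ x : G, D (πm x) = πm (x⁻¹ * α x) := by
    intro x
    rw [hD, hA, pow_one, map_mul, map_inv]
    exact mul_comm _ _
  have hDker : ∀ q : G ⧸ Z, q ∈ D.ker ↔ A 1 q = q := by
    intro q
    rw [MonoidHom.mem_ker, hD, mul_inv_eq_one]
  -- N maps onto the range of D
  have hmapN : N.map πm = D.range := by
    rw [hNdef, MonoidHom.map_closure]
    have himg : πm '' {y : G | ∃ g : G, y = g⁻¹ * α g} = Set.range D := by
      ext q
      constructor
      · rintro ⟨y, ⟨g, rfl⟩, rfl⟩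
        exact ⟨πm g, hDmk g⟩
      · rintro ⟨u, rfl⟩
        obtain ⟨x, rfl⟩ := hπsurj u
        exact ⟨x⁻¹ * α x, ⟨x, rfl⟩, (hDmk x).symm⟩
    rw [himg, ← MonoidHom.coe_range, Subgroup.closure_eq]
  -- telescoping identities
  have hshift : ∀ q : G ⧸ Z, ∏ k ∈ Finset.range m, A (k + 1) q = ν q := by
    intro q
    have h1 := Finset.prod_range_succ' (fun k => A k q) m
    have h2 := Finset.prod_range_succ (fun k => A k q) m
    rw [h2] at h1
    rw [hν]
    have := h1.symm
    rw [hA0, hAm] at this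
    -- this : (∏ k ∈ range m, A (k+1) q) * q = (∏ k ∈ range m, A k q) * q
    exact mul_right_cancel this
  have hνA1 : ∀ q : G ⧸ Z, ν (A 1 q) = ν q := by
    intro q
    calc ν (A 1 q) = ∏ k ∈ Finset.range m, A k (A 1 q) := hν _
    _ = ∏ k ∈ Finset.range m, A (k + 1) q :=
        Finset.prod_congr rfl (fun k _ => (hAsucc k q).symm)
    _ = ν q := hshift q
  have hA1ν : ∀ q : G ⧸ Z, A 1 (ν q) = ν q := by
    intro q
    calc A 1 (ν q) = ∏ k ∈ Finset.range m, A 1 (A k q) := by rw [hν, map_prod]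
    _ = ∏ k ∈ Finset.range m, A (k + 1) q :=
        Finset.prod_congr rfl (fun k _ => (hAsucc' k q).symm)
    _ = ν q := hshift q
  have hνA : ∀ (k : ℕ) (q : G ⧸ Z), ν (A k q) = ν q := by
    intro k
    induction k with
    | zero => intro q; rw [hA0]
    | succ k ih =>
      intro q
      rw [hAsucc, ih (A 1 q), hνA1]
  have hνfixed : ∀ q : G ⧸ Z, ν q ∈ D.ker := by
    intro q
    rw [hDker]
    exact hA1ν q
  have hfixpow : ∀ q ∈ D.ker, ν q = q ^ m := by
    intro q hq
    rw [hDker] at hq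
    have hall : ∀ k : ℕ, A k q = q := by
      intro k
      induction k with
      | zero => exact hA0 q
      | succ k ih => rw [hAsucc', ih, hq]
    rw [hν, Finset.prod_congr rfl (fun k _ => hall k), Finset.prod_const, Finset.card_range]
    -- the images of the factors in the quotient
  set Qs : Fin m → Subgroup (G ⧸ Z) := fun i => (Gsub i).map πm with hQsdef
  have hA1Qs : ∀ i : Fin m, ∀ q ∈ Qs i, A 1 q ∈ Qs (i + 1) := by
    rintro i q ⟨g, hgm, rfl⟩
    have h1 : A 1 (πm g) = πm (α g) := by rw [hA, pow_one]
    rw [h1]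
    exact ⟨α g, halpha i g hgm, rfl⟩
  have hAkQs : ∀ (k : ℕ) (i : Fin m), ∀ q ∈ Qs i, A k q ∈ Qs (i + (k : Fin m)) := by
    intro k
    induction k with
    | zero =>
      intro i q hq
      rw [hA0 q]
      simpa using hq
    | succ k ih =>
      intro i q hq
      have h1 : A (k + 1) q = A 1 (A k q) := hAsucc' k q
      have h2 := hA1Qs _ _ (ih i q hq)
      rw [h1]
      have h3 : i + ((k : ℕ) + 1 : ℕ) = (i + (k : ℕ)) + 1 := by
        rw [Nat.cast_add_one, add_assoc]
      rwa [h3]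
  have hpairQ : Pairwise fun i j : Fin m =>
      ∀ x y : G ⧸ Z, x ∈ Qs i → y ∈ Qs j → Commute x y :=
    fun i j _ => fun x y _ _ => Commute.all x y
  set φ : ((i : Fin m) → ↥(Qs i)) →* G ⧸ Z := Subgroup.noncommPiCoprod hpairQ with hφdef
  have hφapply : ∀ u : (i : Fin m) → ↥(Qs i), φ u = ∏ i : Fin m, (u i : G ⧸ Z) := by
    intro u
    rw [hφdef, Subgroup.noncommPiCoprod_apply]
    exact Finset.noncommProd_eq_prod _ _
  have hQssup : ⨆ i, Qs i = ⊤ := by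
    rw [hQsdef]
    have h1 : (⨆ i, (Gsub i).map πm) = (⨆ i, Gsub i).map πm := (Subgroup.map_iSup πm Gsub).symm
    rw [h1, hsup, ← MonoidHom.range_eq_map]
    exact MonoidHom.range_eq_top.mpr hπsurj
  have hφsurj : Function.Surjective φ := by
    rw [← MonoidHom.range_eq_top, hφdef, Subgroup.noncommPiCoprod_range]
    exact hQssup
  have hind : iSupIndep Qs := by
    intro i
    rw [disjoint_iff_inf_le]
    rintro q ⟨hq1, hq2⟩
    have hrest : (⨆ (j) (_ : j ≠ i), Qs j) ≤ (Subgroup.centralizer (Gsub i : Set G)).map πm := by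
      refine iSup_le fun j => iSup_le fun hj => Subgroup.map_mono ?_
      intro y hy
      exact Subgroup.mem_centralizer_iff.mpr fun h hh => ((hcomm j i hj y hy h hh).symm).eq
    obtain ⟨g, hgmem, rfl⟩ := hq1
    obtain ⟨c, hc, hcq⟩ := hrest hq2
    have hz : c⁻¹ * g ∈ Z := by
      rw [← hπone]
      rw [map_mul, map_inv, hcq, inv_mul_cancel]
    have hgc : g ∈ Subgroup.centralizer (Gsub i : Set G) := by
      have : g = c * (c⁻¹ * g) := by group
      rw [this]
      exact Subgroup.mul_mem _ hc (Subgroup.center_le_centralizer _ (hZcenter hz))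
    have : g ∈ Z := by
      rw [← hZi i]
      exact ⟨hgmem, hgc⟩
    rw [Subgroup.mem_bot]
    exact (hπone g).mpr this
  have hφinj : Function.Injective φ :=
    Subgroup.injective_noncommPiCoprod_of_iSupIndep hind
  -- cardinalities
  haveI : Finite (G ⧸ Z) := Quotient.finite _
  have hcardQs : ∀ i : Fin m, Nat.card (Qs i) = p ^ 2 := by
    intro i
    set f : ↥(Gsub i) →* G ⧸ Z := πm.comp (Gsub i).subtype with hfdef
    have hrange : f.range = Qs i := by
      rw [hfdef, MonoidHom.range_comp, Subgroup.range_subtype]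
    have hker : Nat.card f.ker = p := by
      have hkeq : f.ker = Z.subgroupOf (Gsub i) := by
        ext x
        simp only [MonoidHom.mem_ker, hfdef, MonoidHom.comp_apply, Subgroup.coe_subtype,
          Subgroup.mem_subgroupOf]
        exact hπone _
      rw [hkeq, ← hcardZ]
      exact Nat.card_congr (Subgroup.subgroupOfEquivOfLe (hZle i)).toEquiv
    have h1 : Nat.card ↥(Gsub i) = Nat.card (↥(Gsub i) ⧸ f.ker) * Nat.card f.ker :=
      Subgroup.card_eq_card_quotient_mul_card_subgroup f.ker
    have h2 : Nat.card (↥(Gsub i) ⧸ f.ker) = Nat.card (Qs i) := by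
      rw [← hrange]
      exact Nat.card_congr (QuotientGroup.quotientKerEquivRange f).toEquiv
    rw [hcard i, h2, hker] at h1
    have hp3 : Nat.card ↥(Qs i) * p = p ^ 2 * p := by rw [← h1]; ring
    exact Nat.eq_of_mul_eq_mul_right hp.pos hp3
  have hcardQ : Nat.card (G ⧸ Z) = p ^ (2 * m) := by
    have hbij : Function.Bijective φ := ⟨hφinj, hφsurj⟩
    have he := Nat.card_congr (MulEquiv.ofBijective φ hbij).toEquiv
    rw [← he, Nat.card_pi, Finset.prod_congr rfl (fun i _ => hcardQs i), Finset.prod_const,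
      Finset.card_univ, Fintype.card_fin, ← pow_mul]
  have hcardG : Nat.card G = p ^ (2 * m + 1) := by
    have h1 : Nat.card G = Nat.card (G ⧸ Z) * Nat.card Z :=
      Subgroup.card_eq_card_quotient_mul_card_subgroup Z
    rw [hcardQ, hcardZ] at h1
    rw [h1, ← pow_succ]
  have hcopQ : Nat.Coprime m (Nat.card (G ⧸ Z)) := by
    refine Nat.Coprime.coprime_dvd_right ?_ hcop
    exact ⟨Nat.card Z, Subgroup.card_eq_card_quotient_mul_card_subgroup Z⟩
    -- the kernel of D is exactly the range of ν
  have hrangeν : ν.range = D.ker := by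
    refine le_antisymm ?_ ?_
    · rintro q ⟨u, rfl⟩
      exact hνfixed u
    · intro q hq
      have hcopK : (Nat.card ↥D.ker).Coprime m :=
        (Nat.Coprime.coprime_dvd_right (Subgroup.card_subgroup_dvd_card D.ker) hcopQ).symm
      set r : ↥D.ker := (powCoprime hcopK).symm ⟨q, hq⟩ with hrdef
      have hrm : r ^ m = (⟨q, hq⟩ : ↥D.ker) := by
        have h1 := (powCoprime hcopK).apply_symm_apply ⟨q, hq⟩
        rwa [powCoprime_apply] at h1
      refine ⟨(r : G ⧸ Z), ?_⟩
      have h1 : ν (r : G ⧸ Z) = (r : G ⧸ Z) ^ m := hfixpow _ r.2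
      have h2 : ((r : G ⧸ Z)) ^ m = q := by
        have := congrArg (Subtype.val) hrm
        simpa using this
      rw [h1, h2]
  -- fixed points in the range of D are trivial
  have hdisj : ∀ q : G ⧸ Z, q ∈ D.ker → q ∈ D.range → q = 1 := by
    intro q hker hran
    obtain ⟨u, rfl⟩ := hran
    have h1 : ν (D u) = 1 := by
      rw [hD, map_mul, map_inv, hνA1, mul_inv_cancel]
    have h2 : ν (D u) = D u ^ m := hfixpow _ hker
    have h3 : D u ^ m = 1 := by rw [← h2, h1]
    have hdvd1 : orderOf (D u) ∣ m := orderOf_dvd_of_pow_eq_one h3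
    have hdvd2 : orderOf (D u) ∣ Nat.card (G ⧸ Z) := orderOf_dvd_natCard _
    have hone : orderOf (D u) = 1 :=
      Nat.dvd_one.mp (hcopQ ▸ Nat.dvd_gcd hdvd1 hdvd2)
    exact orderOf_eq_one_iff.mp hone
  -- every value of ν is attained on Qs 0
  have hν0 : ∀ q : G ⧸ Z, ∃ u ∈ Qs 0, ν u = ν q := by
    intro q
    obtain ⟨w, rfl⟩ := hφsurj q
    rw [hφapply]
    refine ⟨∏ i : Fin m, A (m - (i : ℕ)) (w i : G ⧸ Z), ?_, ?_⟩
    · refine Subgroup.prod_mem _ ?_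
      intro i _
      have h1 := hAkQs (m - (i : ℕ)) i (w i : G ⧸ Z) (w i).2
      have h2 : i + ((m - (i : ℕ) : ℕ) : Fin m) = 0 := by
        have hle : (i : ℕ) ≤ m := le_of_lt i.isLt
        rw [Fin.ext_iff, Fin.val_add, Fin.val_natCast, Fin.val_zero, Nat.add_mod_mod,
          Nat.add_sub_cancel' hle, Nat.mod_self]
      rwa [h2] at h1
    · rw [map_prod, map_prod]
      exact Finset.prod_congr rfl fun i _ => hνA _ _
  -- ν is injective on Qs 0
  have hinjν0 : ∀ u ∈ Qs 0, ν u = 1 → u = 1 := by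
    intro u hu hνu
    set w : (i : Fin m) → ↥(Qs i) := fun i => ⟨A (i : ℕ) u, by
      have h1 := hAkQs (i : ℕ) 0 u hu
      rwa [zero_add, Fin.cast_val_eq_self] at h1⟩ with hwdef
    have h1 : φ w = 1 := by
      rw [hφapply]
      have h2 : ∏ i : Fin m, (w i : G ⧸ Z) = ∏ k ∈ Finset.range m, A k u :=
        Fin.prod_univ_eq_prod_range (fun k => A k u) m
      rw [h2, ← hν, hνu]
    have hw1 : w = 1 := hφinj (by rw [h1, map_one])
    have h3 : (w 0 : G ⧸ Z) = 1 := by rw [hw1]; rfl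
    rw [hwdef] at h3
    simp only [Fin.val_zero] at h3
    rw [hA0] at h3
    exact h3
  -- the cardinality of the kernel of D
  have hcardker : Nat.card ↥D.ker = p ^ 2 := by
    set μ : ↥(Qs 0) →* G ⧸ Z := ν.comp (Qs 0).subtype with hμdef
    have hμrange : μ.range = D.ker := by
      refine le_antisymm ?_ ?_
      · rintro q ⟨u, rfl⟩
        exact hνfixed _
      · intro q hq
        rw [← hrangeν] at hq
        obtain ⟨v, rfl⟩ := hq
        obtain ⟨u, hu, huv⟩ := hν0 v
        exact ⟨⟨u, hu⟩, huv⟩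
    have hμinj : Function.Injective μ := by
      intro x y hxy
      have hxy' : ν (x : G ⧸ Z) = ν (y : G ⧸ Z) := hxy
      have h1 : ν ((x : G ⧸ Z) * (y : G ⧸ Z)⁻¹) = 1 := by
        rw [map_mul, map_inv, hxy', mul_inv_cancel]
      have h2 : (x : G ⧸ Z) * (y : G ⧸ Z)⁻¹ ∈ Qs 0 :=
        (Qs 0).mul_mem x.2 ((Qs 0).inv_mem y.2)
      have h3 := hinjν0 _ h2 h1
      exact Subtype.ext (mul_inv_eq_one.mp h3)
    have he := Nat.card_congr (MonoidHom.ofInjective hμinj).toEquiv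
    rw [hμrange] at he
    rw [← he, hcardQs 0]
  -- the index of N
  have hNindex : N.index = p ^ 2 := by
    have h1 : (N.map πm).index = N.index :=
      Subgroup.index_map_eq N hπsurj (by rw [hkerπ]; exact hZN)
    have h2 : Nat.card (G ⧸ Z) = Nat.card ↥D.range * Nat.card ↥D.ker := by
      rw [Subgroup.card_eq_card_quotient_mul_card_subgroup D.ker]
      congr 1
      exact Nat.card_congr (QuotientGroup.quotientKerEquivRange D).toEquiv
    have h3 : Nat.card ↥D.range * D.range.index = Nat.card (G ⧸ Z) :=
      Subgroup.card_mul_index D.range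
    have h4 : D.range.index = Nat.card ↥D.ker := by
      have hpos : 0 < Nat.card ↥D.range := Nat.card_pos
      apply Nat.eq_of_mul_eq_mul_left hpos
      rw [h3, h2]
    rw [← h1, hmapN, h4, hcardker]
    -- the center of G is exactly Z
  have hcenterG : Subgroup.center G ≤ Z := by
    intro y hy
    obtain ⟨w, hw⟩ := hφsurj (πm y)
    have hlift : ∀ i : Fin m, ∃ g, g ∈ Gsub i ∧ πm g = (w i : G ⧸ Z) := by
      intro i
      obtain ⟨g, hg1, hg2⟩ := (w i).2
      exact ⟨g, hg1, hg2⟩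
    choose gs hgs1 hgs2 using hlift
    classical
    have hcomp : ∀ i : Fin m, (w i : G ⧸ Z) = 1 := by
      intro i
      have hcommS : ((Finset.univ.erase i : Finset (Fin m)) : Set (Fin m)).Pairwise
          (Function.onFun Commute gs) := by
        intro a _ b _ hab
        exact hcomm a b hab (gs a) (hgs1 a) (gs b) (hgs1 b)
      set s : G := (Finset.univ.erase i).noncommProd gs hcommS with hsdef
      have hsc : s ∈ Subgroup.centralizer (Gsub i : Set G) := by
        refine Subgroup.noncommProd_mem _ _ ?_
        intro j hj
        have hji : j ≠ i := Finset.ne_of_mem_erase hj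
        exact Subgroup.mem_centralizer_iff.mpr
          fun h hh => ((hcomm j i hji (gs j) (hgs1 j) h hh).symm).eq
      have hπs : πm (gs i * s) = πm y := by
        have h1 : πm s = ∏ j ∈ Finset.univ.erase i, (w j : G ⧸ Z) := by
          rw [hsdef, Finset.map_noncommProd, Finset.noncommProd_eq_prod]
          exact Finset.prod_congr rfl fun j _ => hgs2 j
        rw [map_mul, h1, hgs2 i,
          Finset.mul_prod_erase Finset.univ (fun j => (w j : G ⧸ Z)) (Finset.mem_univ i),
          ← hφapply w, hw]
      have hzZ : (gs i * s)⁻¹ * y ∈ Z := by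
        rw [← hπone, map_mul, map_inv, hπs, inv_mul_cancel]
      set c : G := s * ((gs i * s)⁻¹ * y) with hcdef
      have hyc : y = gs i * c := by rw [hcdef]; group
      have hcc : c ∈ Subgroup.centralizer (Gsub i : Set G) :=
        Subgroup.mul_mem _ hsc (Subgroup.center_le_centralizer _ (hZcenter hzZ))
      have hgi : gs i ∈ Subgroup.centralizer (Gsub i : Set G) := by
        refine Subgroup.mem_centralizer_iff.mpr ?_
        intro h hh
        have hyh : h * (gs i * c) = gs i * c * h := by
          rw [← hyc]
          exact Subgroup.mem_center_iff.mp hy h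
        have hch : h * c = c * h := Subgroup.mem_centralizer_iff.mp hcc h hh
        have e1 : h * gs i * c = gs i * h * c := by
          calc h * gs i * c = h * (gs i * c) := by rw [mul_assoc]
          _ = gs i * c * h := hyh
          _ = gs i * (c * h) := by rw [mul_assoc]
          _ = gs i * (h * c) := by rw [hch]
          _ = gs i * h * c := by rw [mul_assoc]
        exact mul_right_cancel e1
      have hgz : gs i ∈ Z := by
        rw [← hZi i]
        exact ⟨hgs1 i, hgi⟩
      rw [← hgs2 i]
      exact (hπone _).mpr hgz
    have hπy1 : πm y = 1 := by
      rw [← hw, hφapply, Finset.prod_congr rfl fun i _ => hcomp i]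
      exact Finset.prod_const_one
    exact (hπone y).mp hπy1
  -- a computation used twice
  have hαx : ∀ u : G, α (α⁻¹ u) = u := by
    intro u
    have h : α (α⁻¹ u) = (α * α⁻¹) u := rfl
    rw [h, mul_inv_cancel]
    rfl
  -- the center of N is the image of Z
  have hZsub_center : Z.subgroupOf N ≤ Subgroup.center ↥N := by
    intro x hx
    rw [Subgroup.mem_subgroupOf] at hx
    rw [Subgroup.mem_center_iff]
    intro g'
    exact Subtype.ext (Subgroup.mem_center_iff.mp (hZcenter hx) (g' : G))
  have hcenterN : Subgroup.center ↥N = Z.subgroupOf N := by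
    refine le_antisymm ?_ hZsub_center
    intro x hx
    rw [Subgroup.mem_subgroupOf]
    have hstep1 : ∀ g : G, ⁅(x : G), g⁻¹ * α g⁆ = 1 := by
      intro g
      have hn : g⁻¹ * α g ∈ N := Subgroup.subset_closure ⟨g, rfl⟩
      have h1 : ((⟨g⁻¹ * α g, hn⟩ : ↥N) * x : ↥N) = x * ⟨g⁻¹ * α g, hn⟩ :=
        Subgroup.mem_center_iff.mp hx _
      have h2 : (g⁻¹ * α g) * (x : G) = (x : G) * (g⁻¹ * α g) := congrArg Subtype.val h1
      exact commutatorElement_eq_one_iff_commute.mpr h2.symm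
    have hstep2 : ∀ g : G, ⁅(x : G), α g⁆ = ⁅(x : G), g⁆ := by
      intro g
      have h1 := hstep1 g
      rw [cc_mul_right hcentral, cc_inv_right hcentral] at h1
      exact (inv_mul_eq_one.mp h1).symm
    have hstep3 : ∀ g : G, ⁅α⁻¹ (x : G), g⁆ = ⁅(x : G), g⁆ := by
      intro g
      have h1 : α ⁅α⁻¹ (x : G), g⁆ = ⁅(x : G), α g⁆ := by
        have hmc := map_commutatorElement α.toMonoidHom (α⁻¹ (x : G)) g
        simp only [MulEquiv.coe_toMonoidHom] at hmc
        rw [hmc, hαx]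
      have h2 : α ⁅α⁻¹ (x : G), g⁆ = ⁅α⁻¹ (x : G), g⁆ :=
        hfix _ (by
          rw [_root_.commutator_def]
          exact Subgroup.commutator_mem_commutator (Subgroup.mem_top _) (Subgroup.mem_top _))
      rw [← h2, h1, hstep2 g]
    have hstep4 : α⁻¹ (x : G) * (x : G)⁻¹ ∈ Subgroup.center G := by
      rw [Subgroup.mem_center_iff]
      intro g
      have h1 : ⁅α⁻¹ (x : G) * (x : G)⁻¹, g⁆ = 1 := by
        rw [cc_mul_left hcentral, cc_inv_left hcentral, hstep3 g, mul_inv_cancel]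
      exact ((commutatorElement_eq_one_iff_commute.mp h1).symm).eq
    have hstep5 : πm (α⁻¹ (x : G)) = πm (x : G) := by
      have h1 : πm (α⁻¹ (x : G) * (x : G)⁻¹) = 1 := (hπone _).mpr (hcenterG hstep4)
      rw [map_mul, map_inv, mul_inv_eq_one] at h1
      exact h1
    have hstep6 : A 1 (πm (x : G)) = πm (x : G) := by
      have h1 : A 1 (πm (α⁻¹ (x : G))) = πm (α (α⁻¹ (x : G))) := by rw [hA, pow_one]
      rw [hstep5, hαx] at h1
      exact h1
    have hstep7 : πm (x : G) ∈ D.range := by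
      rw [← hmapN]
      exact Subgroup.mem_map_of_mem πm x.2
    have hfin : πm (x : G) = 1 := hdisj _ (by rw [hDker]; exact hstep6) hstep7
    exact (hπone _).mp hfin
  -- the commutator of N is the image of Z
  have hcommN : _root_.commutator ↥N = Z.subgroupOf N := by
    refine le_antisymm ?_ ?_
    · rw [_root_.commutator_def]
      refine Subgroup.commutator_le.mpr ?_
      intro a _ b _
      rw [Subgroup.mem_subgroupOf]
      have hco : ((⁅a, b⁆ : ↥N) : G) = ⁅(a : G), (b : G)⁆ := by simp [commutatorElement_def]
      rw [hco]
      exact hcommZ _ _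
    · intro x hx
      rw [Subgroup.mem_subgroupOf, ← hZzp, Subgroup.mem_zpowers_iff] at hx
      obtain ⟨k, hk⟩ := hx
      have hab' : (⁅(⟨a, ha⟩ : ↥N), (⟨b, hb⟩ : ↥N)⁆ : ↥N) ∈ _root_.commutator ↥N := by
        rw [_root_.commutator_def]
        exact Subgroup.commutator_mem_commutator (Subgroup.mem_top _) (Subgroup.mem_top _)
      have hxeq : x = ⁅(⟨a, ha⟩ : ↥N), (⟨b, hb⟩ : ↥N)⁆ ^ k := by
        refine Subtype.ext ?_
        have hcoe : ((⁅(⟨a, ha⟩ : ↥N), (⟨b, hb⟩ : ↥N)⁆ : ↥N) : G) = ⁅a, b⁆ := by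
          simp [commutatorElement_def]
        have h1 : ((⁅(⟨a, ha⟩ : ↥N), (⟨b, hb⟩ : ↥N)⁆ ^ k : ↥N) : G) = ⁅a, b⁆ ^ k := by
          rw [SubgroupClass.coe_zpow, hcoe]
        rw [h1]
        exact hk.symm
      rw [hxeq]
      exact Subgroup.zpow_mem _ hab' k
  have hcardZN : Nat.card ↥(Z.subgroupOf N) = p := by
    rw [← hcardZ]
    exact Nat.card_congr (Subgroup.subgroupOfEquivOfLe hZN).toEquiv
  refine ⟨⟨?_, ?_, ?_⟩, hNindex⟩
  · exact IsPGroup.to_subgroup (IsPGroup.of_card hcardG) N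
  · rw [hcommN, hcenterN]
  · rw [hcenterN]
    exact hcardZN
end

section
/- Under the hypotheses of the previous statement (G a central product of m ≥ 2 isomorphic extra-special groups of order p³, α a coprime automorphism of order m cyclically permuting the factors with G' ≤ C_G(α)), the fixed-point subgroup C_{[G,α]}(α) equals G' and has order p. -/
lemma closure_alpha_normal {G : Type*} [Group G] (α : MulAut G) :
    (Subgroup.closure {y : G | ∃ g : G, y = g⁻¹ * α g}).Normal := by
  set S : Set G := {y : G | ∃ g : G, y = g⁻¹ * α g} with hS
  set N : Subgroup G := Subgroup.closure S with hNdef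
  constructor
  intro n hn h
  induction hn using Subgroup.closure_induction generalizing h with
  | mem s hs =>
    obtain ⟨g, rfl⟩ := hs
    have h1 : (g * h⁻¹)⁻¹ * α (g * h⁻¹) ∈ N := Subgroup.subset_closure ⟨g * h⁻¹, rfl⟩
    have h2 : (h⁻¹)⁻¹ * α h⁻¹ ∈ N := Subgroup.subset_closure ⟨h⁻¹, rfl⟩
    have h3 := mul_mem h1 (inv_mem h2)
    have he : h * (g⁻¹ * α g) * h⁻¹
        = ((g * h⁻¹)⁻¹ * α (g * h⁻¹)) * ((h⁻¹)⁻¹ * α h⁻¹)⁻¹ := by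
      simp only [map_mul, map_inv]
      group
    rwa [he]
  | one => simpa using one_mem N
  | mul x y hx hy ihx ihy =>
    have := mul_mem (ihx h) (ihy h)
    have he : h * (x * y) * h⁻¹ = (h * x * h⁻¹) * (h * y * h⁻¹) := by group
    rwa [he]
  | inv x hx ihx =>
    have := inv_mem (ihx h)
    have he : h * x⁻¹ * h⁻¹ = (h * x * h⁻¹)⁻¹ := by group
    rwa [he]

open scoped commutatorElement

/-- Under the hypotheses of the central product theorem (`G` a central product of
`m ≥ 2` isomorphic extra-special groups of order `p³`, `α` a coprime automorphism of
order `m` cyclically permuting the factors with `G' ≤ C_G(α)`), the fixed-point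
subgroup `C_{[G,α]}(α)` equals `G'` and has order `p`. -/
theorem stmt_11 {G : Type*} [Group G] [Finite G] (p m : ℕ) (hp : p.Prime)
    (hm : 2 ≤ m) [NeZero m]
    (Gsub : Fin m → Subgroup G)
    (hextra : ∀ i : Fin m, IsExtraspecial p (Gsub i))
    (hcard : ∀ i : Fin m, Nat.card (Gsub i) = p ^ 3)
    (hiso : ∀ i : Fin m, Nonempty ((Gsub i) ≃* (Gsub 0)))
    (hsup : ⨆ i, Gsub i = ⊤)
    (hcomm : ∀ i j : Fin m, i ≠ j → ∀ x ∈ Gsub i, ∀ y ∈ Gsub j, Commute x y)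
    (hcent : ∀ i j : Fin m, i ≠ j →
      Gsub i ⊓ Gsub j = Gsub i ⊓ Subgroup.centralizer (Gsub i : Set G))
    (α : MulAut G) (hord : orderOf α = m)
    (hcop : Nat.Coprime m (Nat.card G))
    (hperm : ∀ i : Fin m, (Gsub i).map α.toMonoidHom = Gsub (i + 1))
    (hfix : ∀ x ∈ commutator G, α x = x) :
    {x : G | x ∈ Subgroup.closure {y : G | ∃ g : G, y = g⁻¹ * α g} ∧ α x = x}
        = (commutator G : Set G) ∧
      Nat.card (commutator G) = p := by
  have hNnormal : (Subgroup.closure {y : G | ∃ g : G, y = g⁻¹ * α g}).Normal :=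
    closure_alpha_normal α
  set S : Set G := {y : G | ∃ g : G, y = g⁻¹ * α g} with hSdef
  set N : Subgroup G := Subgroup.closure S with hNdef
  -- 0 ≠ 1 in Fin m
  have h01 : (0 : Fin m) ≠ 1 := by
    have : ((1 : Fin m) : ℕ) = 1 % m := Fin.val_one' m
    intro h
    have h2 := congrArg Fin.val h
    rw [Fin.val_zero, this, Nat.mod_eq_of_lt (by omega)] at h2
    omega
  -- the common center
  set C : Fin m → Subgroup G :=
    fun i => (Subgroup.center (Gsub i)).map (Gsub i).subtype with hCdef
  have hCmem : ∀ i, C i = Gsub i ⊓ Subgroup.centralizer (Gsub i : Set G) := by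
    intro i
    ext x
    simp only [hCdef, Subgroup.mem_map, Subgroup.mem_inf, Subgroup.mem_centralizer_iff,
      Subgroup.coe_subtype]
    constructor
    · rintro ⟨⟨c, hc⟩, hcenter, rfl⟩
      refine ⟨hc, fun g hg => ?_⟩
      exact congrArg Subtype.val (Subgroup.mem_center_iff.mp hcenter ⟨g, hg⟩)
    · rintro ⟨hx, hcx⟩
      exact ⟨⟨x, hx⟩, Subgroup.mem_center_iff.mpr (fun g => Subtype.ext (hcx g g.2)), rfl⟩
  have hCcard : ∀ i, Nat.card (C i) = p := by
    intro i
    rw [hCdef]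
    rw [← (hextra i).2.2]
    exact (Nat.card_congr
      ((Subgroup.equivMapOfInjective _ _ (Gsub i).subtype_injective).toEquiv)).symm
  set Z : Subgroup G := C 0 with hZdef
  have hCeq : ∀ i, C i = Z := by
    intro i
    by_cases h : i = 0
    · rw [h]
    · calc C i = Gsub i ⊓ Subgroup.centralizer (Gsub i : Set G) := hCmem i
        _ = Gsub i ⊓ Gsub 0 := (hcent i 0 h).symm
        _ = Gsub 0 ⊓ Gsub i := inf_comm _ _
        _ = Gsub 0 ⊓ Subgroup.centralizer (Gsub 0 : Set G) := hcent 0 i (Ne.symm h)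
        _ = Z := (hCmem 0).symm
  have hZle : ∀ i, Z ≤ Subgroup.centralizer (Gsub i : Set G) := by
    intro i
    rw [← hCeq i, hCmem i]
    exact inf_le_right
  have hZcenter : Z ≤ Subgroup.center G := by
    intro z hz
    rw [Subgroup.mem_center_iff]
    intro g
    have hg : g ∈ ⨆ i, Gsub i := by rw [hsup]; exact Subgroup.mem_top g
    have hle : (⨆ i, Gsub i) ≤ Subgroup.centralizer {z} := by
      refine iSup_le fun i y hy => ?_
      rw [Subgroup.mem_centralizer_iff]
      intro h hh
      rw [Set.mem_singleton_iff] at hh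
      subst hh
      exact (Subgroup.mem_centralizer_iff.mp (hZle i hz) y hy).symm
    have := Subgroup.mem_centralizer_iff.mp (hle hg) z rfl
    exact this.symm
  have hZnormal : Z.Normal := by
    constructor
    intro n hn g
    have hc := Subgroup.mem_center_iff.mp (hZcenter hn) g
    have : g * n * g⁻¹ = n := by rw [hc]; group
    rwa [this]
  -- commutators of elements of the same factor lie in Z
  have hcommZ : ∀ i, ∀ x ∈ Gsub i, ∀ y ∈ Gsub i, ⁅x, y⁆ ∈ Z := by
    intro i x hx y hy
    rw [← hCeq i]
    refine ⟨⁅(⟨x, hx⟩ : Gsub i), (⟨y, hy⟩ : Gsub i)⁆, ?_, rfl⟩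
    have : ⁅(⟨x, hx⟩ : Gsub i), (⟨y, hy⟩ : Gsub i)⁆ ∈ commutator (Gsub i) := by
      rw [commutator_def]
      exact Subgroup.commutator_mem_commutator (Subgroup.mem_top _) (Subgroup.mem_top _)
    rwa [(hextra i).2.1] at this
  -- commutator G ≤ Z
  have hcommle : commutator G ≤ Z := by
    haveI := hZnormal
    have hcentertop : ∀ a : G ⧸ Z, a ∈ Subgroup.center (G ⧸ Z) := by
      have hmap : (⊤ : Subgroup (G ⧸ Z)) = ⨆ i, (Gsub i).map (QuotientGroup.mk' Z) := by
        rw [← Subgroup.map_iSup, hsup,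
          Subgroup.map_top_of_surjective _ (QuotientGroup.mk'_surjective Z)]
      have hgen : ∀ i, (Gsub i).map (QuotientGroup.mk' Z) ≤ Subgroup.center (G ⧸ Z) := by
        intro i
        rintro a ⟨x, hx, rfl⟩
        rw [Subgroup.mem_center_iff]
        intro b
        have hb : b ∈ ⨆ j, (Gsub j).map (QuotientGroup.mk' Z) := by
          rw [← hmap]; exact Subgroup.mem_top b
        have hle2 : (⨆ j, (Gsub j).map (QuotientGroup.mk' Z))
            ≤ Subgroup.centralizer {QuotientGroup.mk' Z x} := by
          refine iSup_le fun j c hc => ?_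
          obtain ⟨y, hy, rfl⟩ := hc
          rw [Subgroup.mem_centralizer_iff]
          intro h hh
          rw [Set.mem_singleton_iff] at hh
          subst hh
          by_cases hij : i = j
          · subst hij
            have hZxy : ⁅x, y⁆ ∈ Z := hcommZ i x hx y hy
            have h1 : QuotientGroup.mk' Z ⁅x, y⁆ = 1 := by
              rw [← MonoidHom.mem_ker, QuotientGroup.ker_mk']
              exact hZxy
            rw [map_commutatorElement] at h1
            exact (commutatorElement_eq_one_iff_commute.mp h1).eq
          · exact ((hcomm i j hij x hx y hy).map (QuotientGroup.mk' Z)).eq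
        exact (Subgroup.mem_centralizer_iff.mp (hle2 hb) _ rfl).symm
      intro a
      have : (⊤ : Subgroup (G ⧸ Z)) ≤ Subgroup.center (G ⧸ Z) := by
        rw [hmap]; exact iSup_le hgen
      exact this (Subgroup.mem_top a)
    rw [commutator_def, Subgroup.commutator_le]
    intro g₁ _ g₂ _
    have h1 : QuotientGroup.mk' Z ⁅g₁, g₂⁆ = 1 := by
      rw [map_commutatorElement, commutatorElement_eq_one_iff_commute]
      exact (Subgroup.mem_center_iff.mp (hcentertop (QuotientGroup.mk' Z g₂))
        (QuotientGroup.mk' Z g₁))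
    rwa [← MonoidHom.mem_ker, QuotientGroup.ker_mk'] at h1
  -- a nontrivial commutator in Gsub 0
  have hnab : ∃ a b : Gsub 0, ⁅a, b⁆ ≠ 1 := by
    by_contra h
    push_neg at h
    have hbot : commutator (Gsub 0) ≤ ⊥ := by
      rw [commutator_def, Subgroup.commutator_le]
      intro a _ b _
      rw [Subgroup.mem_bot]
      exact h a b
    rw [(hextra 0).2.1, le_bot_iff] at hbot
    have := (hextra 0).2.2
    rw [hbot, Subgroup.card_bot] at this
    exact hp.one_lt.ne this
  obtain ⟨a, b, hab⟩ := hnab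
  set x : G := (a : G) with hxdef
  set y : G := (b : G) with hydef
  set z : G := ⁅x, y⁆ with hzdef
  have hzcoe : z = ((⁅a, b⁆ : Gsub 0) : G) := rfl
  have hz1 : z ≠ 1 := by
    rw [hzcoe]
    simpa using hab
  have hzc : ⁅a, b⁆ ∈ Subgroup.center (Gsub 0) := by
    rw [← (hextra 0).2.1, commutator_def]
    exact Subgroup.commutator_mem_commutator (Subgroup.mem_top _) (Subgroup.mem_top _)
  have horder : orderOf z = p := by
    have h1 : orderOf z = orderOf ⁅a, b⁆ := by
      rw [hzcoe, Subgroup.orderOf_coe]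
    have h2 : orderOf ⁅a, b⁆ ∣ p := by
      rw [← (hextra 0).2.2]
      exact Subgroup.orderOf_dvd_natCard _ hzc
    rw [h1]
    rcases (Nat.Prime.eq_one_or_self_of_dvd hp _ h2) with h | h
    · exfalso
      apply hz1
      rw [hzcoe]
      have : ⁅a, b⁆ = 1 := orderOf_eq_one_iff.mp h
      simp [this]
    · exact h
  -- α y ∈ Gsub 1 and commutation facts
  have hy1 : α y ∈ Gsub 1 := by
    have : α y ∈ (Gsub 0).map α.toMonoidHom := ⟨y, b.2, rfl⟩
    rw [hperm 0] at this
    rwa [zero_add] at this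
  have hxy : Commute x (α y) := hcomm 0 1 h01 x a.2 (α y) hy1
  have hzy : Commute z y := by
    have := Subgroup.mem_center_iff.mp hzc b
    have h2 := congrArg Subtype.val this
    exact (h2).symm
  set t : G := y⁻¹ * α y with htdef
  have htN : t ∈ N := Subgroup.subset_closure ⟨y, rfl⟩
  have hconjN : x * t * x⁻¹ ∈ N := hNnormal.conj_mem t htN x
  have hwN : x * t * x⁻¹ * t⁻¹ ∈ N := mul_mem hconjN (inv_mem htN)
  have hwz : x * t * x⁻¹ * t⁻¹ = z⁻¹ := by
    have h1 : x * t * x⁻¹ * t⁻¹ = x * y⁻¹ * x⁻¹ * y := by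
      have hc : x⁻¹ * α y = α y * x⁻¹ := hxy.inv_left.eq
      rw [htdef]
      simp only [mul_inv_rev, inv_inv, mul_assoc]
      rw [← mul_assoc (α y) x⁻¹, ← hc]
      simp [mul_assoc]
    have h2 : x * y⁻¹ * x⁻¹ * y = z⁻¹ := by
      have hk : z * y = x * y * x⁻¹ := by
        rw [hzdef, commutatorElement_def]
        group
      have key : x * y⁻¹ * x⁻¹ = y⁻¹ * z⁻¹ := by
        have : x * y⁻¹ * x⁻¹ = (x * y * x⁻¹)⁻¹ := by group
        rw [this, ← hk]
        group
      rw [key, mul_assoc, hzy.inv_left.eq]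
      group
    rw [h1, h2]
  have hzN : z⁻¹ ∈ N := by rwa [hwz] at hwN
  have hzcommG : z ∈ commutator G := by
    rw [commutator_def]
    exact Subgroup.commutator_mem_commutator (Subgroup.mem_top _) (Subgroup.mem_top _)
  set K : Subgroup G := Subgroup.zpowers z⁻¹ with hKdef
  have hKcard : Nat.card K = p := by
    rw [hKdef, Nat.card_zpowers, orderOf_inv, horder]
  have hKle : K ≤ commutator G := Subgroup.zpowers_le.mpr (inv_mem hzcommG)
  have hKZ : K = Z := by
    refine Subgroup.eq_of_le_of_card_ge (hKle.trans hcommle) ?_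
    rw [hKcard]
    rw [hZdef, hCcard 0]
  have hcommK : commutator G = K := le_antisymm (by rw [hKZ]; exact hcommle) hKle
  have hcardcomm : Nat.card (commutator G) = p := by rw [hcommK, hKcard]
  have hcommN : commutator G ≤ N := by
    rw [hcommK]
    exact Subgroup.zpowers_le.mpr hzN
  refine ⟨?_, hcardcomm⟩
  ext u
  simp only [Set.mem_setOf_eq, SetLike.mem_coe]
  constructor
  · rintro ⟨huN, huα⟩
    -- abelianization argument
    set A := Abelianization G with hAdef
    set f : G →* A := Abelianization.of with hfdef
    set β : A →* A := Abelianization.lift (f.comp α.toMonoidHom) with hβdef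
    have hβof : ∀ g : G, β (f g) = f (α g) := fun g => Abelianization.lift_apply_of _ _
    set e : Monoid.End A := β with hedef
    have hek : ∀ (k : ℕ) (g : G), (e ^ k) (f g) = f ((α ^ k) g) := by
      intro k
      induction k with
      | zero => intro g; simp
      | succ k ih =>
        intro g
        rw [pow_succ, pow_succ]
        have : (e ^ k * e) (f g) = (e ^ k) (e (f g)) := rfl
        rw [this]
        have he : e (f g) = f (α g) := hβof g
        rw [he, ih]
        congr 1
    set Nrm : A →* A := MonoidHom.mk' (fun c => ∏ i ∈ Finset.range m, (e ^ i) c)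
      (by
        intro c d
        rw [← Finset.prod_mul_distrib]
        exact Finset.prod_congr rfl fun i _ => map_mul _ _ _) with hNrmdef
    have hNrmapp : ∀ c : A, Nrm c = ∏ i ∈ Finset.range m, (e ^ i) c := fun c => rfl
    have hshift : ∀ g : G, Nrm (f (α g)) = Nrm (f g) := by
      intro g
      have hterm : ∀ i : ℕ, (e ^ i) (f (α g)) = (e ^ (i + 1)) (f g) := by
        intro i
        rw [hek i (α g), hek (i + 1) g]
        congr 1
      have h0m : (e ^ m) (f g) = (e ^ 0) (f g) := by
        rw [hek m g, hek 0 g, ← hord, pow_orderOf_eq_one]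
        simp
      have ha := Finset.prod_range_succ (fun i => (e ^ i) (f g)) m
      have hb := Finset.prod_range_succ' (fun i => (e ^ i) (f g)) m
      rw [hNrmapp, hNrmapp]
      calc (∏ i ∈ Finset.range m, (e ^ i) (f (α g)))
          = ∏ i ∈ Finset.range m, (e ^ (i + 1)) (f g) :=
            Finset.prod_congr rfl fun i _ => hterm i
        _ = ∏ i ∈ Finset.range m, (e ^ i) (f g) := by
            have := hb.symm.trans ha
            rw [h0m] at this
            exact mul_right_cancel this
    have hNu : Nrm (f u) = 1 := by
      have hle : N ≤ (Nrm.comp f).ker := by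
        rw [hNdef]
        refine Subgroup.closure_le _ |>.mpr ?_
        rintro s ⟨g, rfl⟩
        rw [SetLike.mem_coe, MonoidHom.mem_ker, MonoidHom.comp_apply]
        rw [map_mul, map_inv, map_mul, map_inv, hshift]
        simp
      have := hle huN
      rwa [MonoidHom.mem_ker, MonoidHom.comp_apply] at this
    have hfixA : e (f u) = f u := by
      rw [hedef]
      show β (f u) = f u
      rw [hβof, huα]
    have hterm2 : ∀ i : ℕ, (e ^ i) (f u) = f u := by
      intro i
      induction i with
      | zero => simp
      | succ k ih =>
        rw [pow_succ]
        have : (e ^ k * e) (f u) = (e ^ k) (e (f u)) := rfl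
        rw [this, hfixA, ih]
    have hpowm : (f u) ^ m = 1 := by
      have : Nrm (f u) = (f u) ^ m := by
        rw [hNrmapp]
        rw [Finset.prod_congr rfl fun i _ => hterm2 i]
        rw [Finset.prod_const, Finset.card_range]
      rw [← this, hNu]
    have hdvd1 : orderOf (f u) ∣ m := orderOf_dvd_of_pow_eq_one hpowm
    have hdvd2 : orderOf (f u) ∣ Nat.card A := orderOf_dvd_natCard _
    have hcardA : Nat.card A ∣ Nat.card G :=
      Subgroup.card_quotient_dvd_card (commutator G)
    have hco : Nat.Coprime m (Nat.card A) := Nat.Coprime.coprime_dvd_right hcardA hcop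
    have hone : orderOf (f u) = 1 :=
      Nat.eq_one_of_dvd_one (hco ▸ Nat.dvd_gcd hdvd1 hdvd2)
    have hfu1 : f u = 1 := orderOf_eq_one_iff.mp hone
    exact (QuotientGroup.eq_one_iff u).mp hfu1
  · intro hu
    exact ⟨hcommN hu, hfix u hu⟩
end

section
/- Let M be an extra-special p-group, K a finite group, W = M wr K the regular wreath product with base group B = ∏_{k∈K} M. Then Z(B) = B', and in the quotient B₀ = B/[B',K], the center satisfies Z(B₀) = B₀', so B₀ is a central product of the images of the direct factors. -/
set_option linter.unusedSectionVars false

open scoped IsMulCommutative commutatorElement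

/-- The automorphism of the base group `B = K → M` of the regular wreath product
`M ≀ K` given by the (left regular) permutation action of `k ∈ K`. -/
def shiftAut {K M : Type*} [Group K] [Group M] (k : K) : MulAut (K → M) where
  toFun f := fun t => f (k⁻¹ * t)
  invFun f := fun t => f (k * t)
  left_inv f := by funext t; simp [← mul_assoc]
  right_inv f := by funext t; simp [← mul_assoc]
  map_mul' f g := rfl

section Aux

variable {M K : Type*} [Group M] [Group K] [DecidableEq K]

theorem myCenterPi : Subgroup.center (K → M) = Subgroup.pi Set.univ (fun _ => Subgroup.center M) := by
  ext x
  simp only [Subgroup.mem_pi, Set.mem_univ, forall_true_left, Subgroup.mem_center_iff]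
  constructor
  · intro h k m
    exact congrFun (h (fun _ => m)) k
  · intro h y
    funext k
    exact h k (y k)

theorem myCommPi [Finite K] : commutator (K → M) = Subgroup.pi Set.univ (fun _ => commutator M) := by
  rw [commutator_def, show (⊤ : Subgroup (K → M)) = Subgroup.pi Set.univ (fun _ => ⊤) by
    ext; simp [Subgroup.mem_pi]]
  rw [Subgroup.commutator_pi_pi_of_finite]
  rfl

/-- coordinatewise inclusion -/
def jmap (M K : Type*) [Group M] [Group K] : (K → Subgroup.center M) →* (K → M) where
  toFun g t := g t
  map_one' := rfl
  map_mul' _ _ := rfl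

/-- total product -/
def psum (M K : Type*) [Group M] [Group K] [Fintype K] :
    (K → Subgroup.center M) →* Subgroup.center M where
  toFun g := ∏ t, g t
  map_one' := by simp
  map_mul' g h := by simp [Finset.prod_mul_distrib]

variable [Fintype K]

theorem centerComm : ∀ a b : Subgroup.center M, Commute (a : M) (b : M) :=
  fun a b => Subgroup.mem_center_iff.mp b.2 a

theorem commApply (x y : K → M) (t : K) : ⁅x, y⁆ t = ⁅x t, y t⁆ := rfl

theorem memN_iff (hcz : commutator M = Subgroup.center M)
    (N : Subgroup (K → M))
    (hNdef : N = Subgroup.closure {x : K → M | ∃ b ∈ commutator (K → M), ∃ k : K,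
        x = b⁻¹ * shiftAut k b})
    [hN : N.Normal] (f : K → M) :
    f ∈ N ↔ ∃ g : K → Subgroup.center M, (∀ t, (g t : M) = f t) ∧ ∏ t, g t = 1 := by
  have hcommB : commutator (K → M) = Subgroup.pi Set.univ (fun _ => Subgroup.center M) := by
    rw [myCommPi]; simp only [hcz]
  constructor
  · -- N ≤ Nsum
    intro hf
    revert f
    suffices h : N ≤ Subgroup.map (jmap M K) (psum M K).ker by
      intro f hf
      obtain ⟨g, hg, rfl⟩ := h hf
      exact ⟨g, fun t => rfl, hg⟩
    rw [hNdef, Subgroup.closure_le]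
    rintro x ⟨b, hb, k, rfl⟩
    rw [hcommB, Subgroup.mem_pi] at hb
    set β : K → Subgroup.center M := fun t => ⟨b t, hb t (Set.mem_univ t)⟩ with hβ
    refine ⟨fun t => (β t)⁻¹ * β (k⁻¹ * t), ?_, ?_⟩
    · show ∏ t, ((β t)⁻¹ * β (k⁻¹ * t)) = 1
      rw [Finset.prod_mul_distrib, Finset.prod_inv_distrib]
      rw [Fintype.prod_equiv (Equiv.mulLeft k⁻¹) (fun t => β (k⁻¹ * t)) β (fun t => rfl)]
      simp
    · funext t
      rfl
  · -- Nsum ≤ N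
    rintro ⟨g, hgf, hg⟩
    have hf : f = jmap M K g := by funext t; exact (hgf t).symm
    subst hf
    rw [← QuotientGroup.eq_one_iff]
    have key : ∀ (k : K) (z : Subgroup.center M),
        (QuotientGroup.mk (Pi.mulSingle 1 (z : M)) : (K → M) ⧸ N) =
          QuotientGroup.mk (Pi.mulSingle k (z : M)) := by
      intro k z
      rw [QuotientGroup.eq]
      rw [hNdef]
      apply Subgroup.subset_closure
      refine ⟨Pi.mulSingle 1 (z : M), ?_, k, ?_⟩
      · rw [hcommB, Subgroup.mem_pi]
        intro t _
        by_cases h : t = 1 <;>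
          simp [Pi.mulSingle_apply, h, Subgroup.one_mem]
      · congr 1
        funext t
        simp only [shiftAut, MulEquiv.coe_mk, Equiv.coe_fn_mk]
        simp only [Pi.mulSingle_apply, inv_mul_eq_one, eq_comm]
    have comm1 : ∀ i ∈ (Finset.univ : Finset K), ∀ j ∈ (Finset.univ : Finset K), i ≠ j →
        Commute (Pi.mulSingle (M := fun _ : K => M) i ((jmap M K g) i))
          (Pi.mulSingle (M := fun _ : K => M) j ((jmap M K g) j)) :=
      fun i _ j _ h => Pi.mulSingle_commute h _ _
    calc (QuotientGroup.mk (jmap M K g) : (K → M) ⧸ N)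
        = QuotientGroup.mk' N
            (Finset.univ.noncommProd (fun i => Pi.mulSingle i ((jmap M K g) i))
            (fun ⦃i⦄ hi ⦃j⦄ hj h => comm1 i hi j hj h)) := by
          rw [Finset.noncommProd_mulSingle]; rfl
      _ = Finset.univ.noncommProd (fun i => QuotientGroup.mk' N (Pi.mulSingle i ((jmap M K g) i)))
            (fun ⦃i⦄ hi ⦃j⦄ hj h => (comm1 i hi j hj h).map _) := by
          exact Finset.map_noncommProd _ _ _ _
      _ = Finset.univ.noncommProd
            (fun i => ((QuotientGroup.mk' N).comp ((MonoidHom.mulSingle (fun _ : K => M) 1).comp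
              (Subgroup.center M).subtype)) (g i))
            (fun ⦃i⦄ _ ⦃j⦄ _ _ => by
              exact ((centerComm (g i) (g j)).map
                (MonoidHom.mulSingle (fun _ : K => M) 1)).map (QuotientGroup.mk' N)) := by
          refine Finset.noncommProd_congr rfl ?_ _
          intro x _
          exact ((key x (g x)).symm : _)
      _ = ((QuotientGroup.mk' N).comp ((MonoidHom.mulSingle (fun _ : K => M) 1).comp
              (Subgroup.center M).subtype))
            (Finset.univ.noncommProd g (fun ⦃i⦄ _ ⦃j⦄ _ _ => mul_comm (g i) (g j))) := by
          exact (Finset.map_noncommProd _ _ _ _).symm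
      _ = 1 := by
          rw [Finset.noncommProd_eq_prod]
          show QuotientGroup.mk' N (MonoidHom.mulSingle (fun _ : K => M) 1 ((∏ t, g t : Subgroup.center M) : M)) = 1
          rw [show (∏ t, g t : Subgroup.center M) = 1 from hg]
          simp

end Aux

/-- For `M` an extra-special `p`-group and `K` a finite group, with `B = M^{|K|}` the
base of the wreath product `M ≀ K`: the center of `B` is `B'`, and in the quotient
`B₀ = B/[B',K]` one again has `Z(B₀) = B₀'`, so that `B₀` is a central product of the
images of the direct factors. -/
theorem stmt_12 {M K : Type*} [Group M] [Finite M] [Group K] [Finite K] [DecidableEq K]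
    (p : ℕ) (hp : p.Prime) (hM : IsExtraspecial p M)
    (N : Subgroup (K → M))
    (hNdef : N = Subgroup.closure {x : K → M | ∃ b ∈ commutator (K → M), ∃ k : K,
        x = b⁻¹ * shiftAut k b})
    [hN : N.Normal] :
    Subgroup.center (K → M) = commutator (K → M) ∧
    Subgroup.center ((K → M) ⧸ N) = commutator ((K → M) ⧸ N) ∧
    (⨆ k : K, ((MonoidHom.mulSingle (fun _ : K => M) k).range.map
        (QuotientGroup.mk' N)) = ⊤) ∧
    (∀ k k' : K, k ≠ k' →
      ∀ x ∈ ((MonoidHom.mulSingle (fun _ : K => M) k).range.map (QuotientGroup.mk' N)),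
      ∀ y ∈ ((MonoidHom.mulSingle (fun _ : K => M) k').range.map (QuotientGroup.mk' N)),
        Commute x y) ∧
    (∀ k k' : K, k ≠ k' →
      ((MonoidHom.mulSingle (fun _ : K => M) k).range.map (QuotientGroup.mk' N)) ⊓
        ((MonoidHom.mulSingle (fun _ : K => M) k').range.map (QuotientGroup.mk' N))
      = ((MonoidHom.mulSingle (fun _ : K => M) k).range.map (QuotientGroup.mk' N)) ⊓
          Subgroup.centralizer
            (((MonoidHom.mulSingle (fun _ : K => M) k).range.map
              (QuotientGroup.mk' N)) : Set ((K → M) ⧸ N))) := by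
  letI : Fintype K := Fintype.ofFinite K
  have hcz : commutator M = Subgroup.center M := hM.2.1
  have hch := memN_iff hcz N hNdef
  have hB' : commutator (K → M) = Subgroup.pi Set.univ (fun _ => Subgroup.center M) := by
    rw [myCommPi]; simp only [hcz]
  -- coordinate extraction
  have hker : ∀ (x : K → M) (k : K), (∀ a : M, ⁅x, Pi.mulSingle k a⁆ ∈ N) →
      x k ∈ Subgroup.center M := by
    intro x k hx
    rw [Subgroup.mem_center_iff]
    intro a
    obtain ⟨g, hgc, hgp⟩ := (hch _).mp (hx a)
    have h1 : ∀ t ∈ Finset.univ, t ≠ k → g t = 1 := by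
      intro t _ ht
      apply Subtype.ext
      show (g t : M) = ((1 : Subgroup.center M) : M)
      rw [hgc t, commApply]
      simp [Pi.mulSingle_apply, ht]
    have h2 : (∏ t, g t) = g k := Finset.prod_eq_single k h1
      (fun h => absurd (Finset.mem_univ k) h)
    have h3 : (g k : M) = 1 := by
      rw [show g k = 1 by rw [← h2, hgp]]
      rfl
    have h4 : ⁅x k, a⁆ = 1 := by
      have h5 := hgc k
      rw [commApply, Pi.mulSingle_eq_same] at h5
      rw [← h5, h3]
    exact (commutatorElement_eq_one_iff_commute.mp h4).symm.eq
  have hcq : commutator ((K → M) ⧸ N) = Subgroup.map (QuotientGroup.mk' N) (commutator (K → M)) := by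
    rw [commutator_def,
      ← Subgroup.map_top_of_surjective (QuotientGroup.mk' N) (QuotientGroup.mk'_surjective N),
      ← Subgroup.map_commutator]
    rfl
  refine ⟨?_, ?_, ?_, ?_, ?_⟩
  · rw [myCenterPi, hB']
  · apply le_antisymm
    · intro x hx
      obtain ⟨f, rfl⟩ := QuotientGroup.mk'_surjective N x
      rw [hcq]
      refine Subgroup.mem_map.mpr ⟨f, ?_, rfl⟩
      rw [hB', Subgroup.mem_pi]
      intro k _
      apply hker f k
      intro a
      have hc : Commute ((QuotientGroup.mk' N) f) ((QuotientGroup.mk' N) (Pi.mulSingle k a)) :=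
        (Subgroup.mem_center_iff.mp hx _).symm
      have h1 : (QuotientGroup.mk' N) ⁅f, Pi.mulSingle k a⁆ = 1 := by
        rw [map_commutatorElement]
        exact commutatorElement_eq_one_iff_commute.mpr hc
      exact (QuotientGroup.eq_one_iff _).mp h1
    · rw [hcq, hB']
      rintro x ⟨f, hf, rfl⟩
      rw [Subgroup.mem_center_iff]
      intro y
      obtain ⟨h, rfl⟩ := QuotientGroup.mk'_surjective N y
      rw [← map_mul, ← map_mul]
      congr 1
      have hfc : f ∈ Subgroup.center (K → M) := by rw [myCenterPi]; exact hf
      exact Subgroup.mem_center_iff.mp hfc h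
  · rw [eq_top_iff]
    intro x _
    obtain ⟨f, rfl⟩ := QuotientGroup.mk'_surjective N x
    have : (QuotientGroup.mk' N) f = (QuotientGroup.mk' N)
        (Finset.univ.noncommProd (fun i => Pi.mulSingle i (f i))
          (fun ⦃i⦄ _ ⦃j⦄ _ h => Pi.mulSingle_commute h _ _)) := by
      rw [Finset.noncommProd_mulSingle]
    rw [this]; erw [Finset.map_noncommProd]
    apply Subgroup.noncommProd_mem
    intro i _
    exact Subgroup.mem_iSup_of_mem i
      (Subgroup.mem_map.mpr ⟨Pi.mulSingle i (f i), ⟨f i, rfl⟩, rfl⟩)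
  · rintro k k' hkk x hx y hy
    obtain ⟨b, hb, rfl⟩ := Subgroup.mem_map.mp hx
    obtain ⟨a, rfl⟩ := hb
    obtain ⟨b', hb', rfl⟩ := Subgroup.mem_map.mp hy
    obtain ⟨a', rfl⟩ := hb'
    exact (by exact (Pi.mulSingle_commute hkk a a').map (QuotientGroup.mk' N) :
      Commute _ _)
  · intro k k' hkk
    apply le_antisymm
    · refine le_inf inf_le_left ?_
      rintro x ⟨hx1, hx2⟩
      rw [Subgroup.mem_centralizer_iff]
      intro y hy
      obtain ⟨b, hb, rfl⟩ := Subgroup.mem_map.mp hy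
      obtain ⟨a, rfl⟩ := hb
      obtain ⟨b', hb', rfl⟩ := Subgroup.mem_map.mp hx2
      obtain ⟨a', rfl⟩ := hb'
      exact (by exact (Pi.mulSingle_commute hkk a a').map (QuotientGroup.mk' N) :
        Commute _ _).eq
    · rintro x ⟨hx1, hx2⟩
      refine ⟨hx1, ?_⟩
      obtain ⟨b, hb, rfl⟩ := Subgroup.mem_map.mp hx1
      obtain ⟨a, rfl⟩ := hb
      have ha : a ∈ Subgroup.center M := by
        have := hker (Pi.mulSingle k a) k ?_
        · rwa [Pi.mulSingle_eq_same] at this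
        intro m
        have hc : (QuotientGroup.mk' N) (Pi.mulSingle k m) *
              (QuotientGroup.mk' N) (Pi.mulSingle k a) =
            (QuotientGroup.mk' N) (Pi.mulSingle k a) *
              (QuotientGroup.mk' N) (Pi.mulSingle k m) := by
          apply Subgroup.mem_centralizer_iff.mp hx2
          exact Subgroup.mem_map.mpr ⟨Pi.mulSingle k m, ⟨m, rfl⟩, rfl⟩
        have h1 : (QuotientGroup.mk' N) ⁅Pi.mulSingle (M := fun _ : K => M) k a, Pi.mulSingle k m⁆ = 1 := by
          rw [map_commutatorElement]
          exact commutatorElement_eq_one_iff_commute.mpr (Commute.symm hc)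
        exact (QuotientGroup.eq_one_iff _).mp h1
      have hmem : (Pi.mulSingle k' (a : M))⁻¹ * Pi.mulSingle k (a : M) ∈ N := by
        refine (hch _).mpr ⟨Pi.mulSingle k ⟨a, ha⟩ * Pi.mulSingle k' ⟨a⁻¹, inv_mem ha⟩, ?_, ?_⟩
        · intro t
          by_cases h1 : t = k
          · subst h1
            simp [Pi.mulSingle_apply, hkk]
          · by_cases h2 : t = k'
            · subst h2
              simp [Pi.mulSingle_apply, h1]
            · simp [Pi.mulSingle_apply, h1, h2]
        · simp only [Pi.mul_apply]
          rw [Finset.prod_mul_distrib, Finset.prod_pi_mulSingle', Finset.prod_pi_mulSingle']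
          ext
          simp
      refine Subgroup.mem_map.mpr ⟨Pi.mulSingle k' (a : M), ⟨a, rfl⟩, ?_⟩
      exact (by exact QuotientGroup.eq.mpr hmem : _)
end

section
/- Let E be an extra-special p-group admitting an action of a group R of prime order r ≠ p such that E = [E,R], and suppose E arises as [P, R] where P is a central product of r copies of an extra-special group of order p³ cyclically permuted by R. Then E contains a non-central element of prime order. -/
open scoped commutatorElement

private lemma pow_aux {G : Type*} [Group G] {a b z : G} (hba : b * a = a * b * z)
    (hzb : Commute z b) (n : ℕ) : b ^ n * a = a * b ^ n * z ^ n := by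
  induction n with
  | zero => simp
  | succ n ih =>
    have h1 : b ^ (n + 1) * a = b * (b ^ n * a) := by rw [pow_succ']; group
    rw [h1, ih]
    calc b * (a * b ^ n * z ^ n) = b * a * (b ^ n * z ^ n) := by group
      _ = a * b * z * (b ^ n * z ^ n) := by rw [hba]
      _ = a * b * (z * b ^ n) * z ^ n := by group
      _ = a * b * (b ^ n * z) * z ^ n := by rw [(hzb.pow_right n).eq]
      _ = a * b ^ (n + 1) * z ^ (n + 1) := by rw [pow_succ, pow_succ']; group

private lemma mul_pow_aux {G : Type*} [Group G] {a b z : G} (hba : b * a = a * b * z)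
    (hza : Commute z a) (hzb : Commute z b) (n : ℕ) :
    (a * b) ^ n = a ^ n * b ^ n * z ^ (n.choose 2) := by
  induction n with
  | zero => simp
  | succ n ih =>
    have hc2 : (n + 1).choose 2 = n.choose 2 + n := by
      rw [Nat.choose_succ_succ, Nat.choose_one_right, Nat.add_comm]
    rw [pow_succ, ih, hc2]
    calc a ^ n * b ^ n * z ^ n.choose 2 * (a * b)
        = a ^ n * b ^ n * (z ^ n.choose 2 * a) * b := by group
      _ = a ^ n * b ^ n * (a * z ^ n.choose 2) * b := by rw [(hza.pow_left _).eq]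
      _ = a ^ n * (b ^ n * a) * (z ^ n.choose 2 * b) := by group
      _ = a ^ n * (a * b ^ n * z ^ n) * (z ^ n.choose 2 * b) := by rw [pow_aux hba hzb n]
      _ = a ^ n * (a * b ^ n * z ^ n) * (b * z ^ n.choose 2) := by rw [(hzb.pow_left _).eq]
      _ = a ^ n * a * b ^ n * (z ^ n * b) * z ^ n.choose 2 := by group
      _ = a ^ n * a * b ^ n * (b * z ^ n) * z ^ n.choose 2 := by rw [(hzb.pow_left n).eq]
      _ = a ^ (n + 1) * b ^ (n + 1) * z ^ (n.choose 2 + n) := by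
          rw [pow_succ, pow_succ, pow_add]; group

private lemma exists_noncomm {A : Type*} [Group A] {p : ℕ} (hp : p.Prime)
    (h1 : commutator A = Subgroup.center A) (h2 : Nat.card (Subgroup.center A) = p) :
    ∃ a b : A, ¬ Commute a b := by
  by_contra h
  push_neg at h
  have hbot : commutator A = ⊥ := by
    rw [commutator_def, eq_bot_iff, Subgroup.commutator_le]
    intro g1 _ g2 _
    rw [commutatorElement_eq_one_iff_commute.mpr (h g1 g2)]
    exact Subgroup.one_mem ⊥
  rw [hbot] at h1
  rw [← h1, Subgroup.card_bot] at h2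
  exact absurd h2.symm hp.one_lt.ne'


private lemma eq_of_card_two {G : Type*} [Group G] {K : Subgroup G} (hK : Nat.card K = 2)
    {u v : G} (hu : u ∈ K) (hv : v ∈ K) (hu1 : u ≠ 1) (hv1 : v ≠ 1) : u = v := by
  obtain ⟨s, t, hst, huniv⟩ := Nat.card_eq_two_iff.mp hK
  have hmem : ∀ w : K, w = s ∨ w = t := by
    intro w
    have : w ∈ ({s, t} : Set K) := huniv ▸ Set.mem_univ w
    simpa using this
  have hU1 : (⟨u, hu⟩ : K) ≠ 1 := fun h => hu1 (by simpa using Subtype.ext_iff.mp h)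
  have hV1 : (⟨v, hv⟩ : K) ≠ 1 := fun h => hv1 (by simpa using Subtype.ext_iff.mp h)
  have h1 := hmem 1
  have key : (⟨u, hu⟩ : K) = ⟨v, hv⟩ := by
    rcases hmem ⟨u, hu⟩ with h | h <;> rcases hmem ⟨v, hv⟩ with h' | h' <;>
      rcases h1 with h1 | h1 <;> simp_all
  simpa using Subtype.ext_iff.mp key

private lemma odd_case {A : Type*} [Group A] [Finite A] {p : ℕ} (hp : p.Prime) (hp2 : p ≠ 2)
    (hpg : IsPGroup p A) (h1 : commutator A = Subgroup.center A)
    (h2 : Nat.card (Subgroup.center A) = p) :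
    ∃ a : A, a ∉ Subgroup.center A ∧ a ≠ 1 ∧ a ^ p = 1 := by
  haveI : Fact p.Prime := ⟨hp⟩
  obtain ⟨a0, b0, hnc⟩ := exists_noncomm hp h1 h2
  -- elements of the center have order dividing p
  have hzc : ∀ g : A, g ∈ Subgroup.center A → g ^ p = 1 := by
    intro g hg
    have h : (⟨g, hg⟩ : Subgroup.center A) ^ p = 1 := by rw [← h2]; exact pow_card_eq_one'
    have := congrArg (Subtype.val) h
    simpa using this
  have hcentral : ∀ g c : A, ⁅g, c⁆ ∈ Subgroup.center A := by
    intro g c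
    rw [← h1, commutator_def]
    exact Subgroup.commutator_mem_commutator (Subgroup.mem_top g) (Subgroup.mem_top c)
  -- the p-th power map is a homomorphism
  have key : ∀ a b : A, (a * b) ^ p = a ^ p * b ^ p := by
    intro a b
    have hz := hcentral b a
    have hcomm : ∀ g : A, Commute ⁅b, a⁆ g := by
      intro g
      exact ((Subgroup.mem_center_iff.mp hz) g).symm
    have hba : b * a = a * b * ⁅b, a⁆ := by
      have : ⁅b, a⁆ * (a * b) = b * a := by group
      rw [← this]
      exact (hcomm (a * b)).eq
    have := mul_pow_aux hba (hcomm a) (hcomm b) p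
    have hdvd : p ∣ p.choose 2 :=
      Nat.Prime.dvd_choose_self hp (by norm_num) (by have := hp.two_le; omega)
    obtain ⟨m, hm⟩ := hdvd
    rw [this, hm, pow_mul, hzc _ hz, one_pow, mul_one]
  let φ : A →* A := MonoidHom.mk' (fun a => a ^ p) key
  have hφ : ∀ a : A, φ a = a ^ p := fun _ => rfl
  have hrange : φ.range ≤ Subgroup.center A := by
    rintro w ⟨a, rfl⟩
    rw [hφ, Subgroup.mem_center_iff]
    intro g
    have hz := hcentral g a
    calc g * a ^ p = g * a ^ p * g⁻¹ * g := by group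
      _ = (g * a * g⁻¹) ^ p * g := by rw [conj_pow]
      _ = (⁅g, a⁆ * a) ^ p * g := by congr 2; group
      _ = ⁅g, a⁆ ^ p * a ^ p * g := by rw [key]
      _ = a ^ p * g := by rw [hzc _ hz, one_mul]
  -- cardinality of A is at least p ^ 3
  obtain ⟨n, hn⟩ := IsPGroup.iff_card.mp hpg
  have hQ := Subgroup.card_eq_card_quotient_mul_card_subgroup (Subgroup.center A)
  rw [h2, hn] at hQ
  have habel : IsCyclic (A ⧸ Subgroup.center A) → False := by
    intro hcyc
    exact hnc (commutative_of_cyclic_center_quotient (QuotientGroup.mk' (Subgroup.center A))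
      (by rw [QuotientGroup.ker_mk']) a0 b0)
  have hn3 : 3 ≤ n := by
    by_contra hlt
    push_neg at hlt
    interval_cases n
    · have := hp.two_le; simp at hQ; nlinarith [Nat.card_pos (α := A ⧸ Subgroup.center A)]
    · have hq1 : Nat.card (A ⧸ Subgroup.center A) = 1 := by
        have := hp.pos
        have : Nat.card (A ⧸ Subgroup.center A) * p = 1 * p := by rw [← hQ]; ring
        exact Nat.eq_of_mul_eq_mul_right hp.pos this
      obtain ⟨x, hx⟩ := Nat.card_eq_one_iff_exists.mp hq1
      exact habel ⟨x, fun y => (hx y) ▸ Subgroup.mem_zpowers x⟩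
    · have hq : Nat.card (A ⧸ Subgroup.center A) = p := by
        have : Nat.card (A ⧸ Subgroup.center A) * p = p * p := by rw [← hQ]; ring
        exact Nat.eq_of_mul_eq_mul_right hp.pos this
      exact habel (isCyclic_of_prime_card hq)
  -- counting argument
  by_contra hcon
  push_neg at hcon
  have hker : φ.ker ≤ Subgroup.center A := by
    intro a ha
    rw [MonoidHom.mem_ker, hφ] at ha
    by_cases h1' : a = 1
    · rw [h1']; exact Subgroup.one_mem _
    · by_contra hc
      exact (hcon a hc h1') ha
  have hkerle : Nat.card φ.ker ≤ p := h2 ▸ Subgroup.card_le_of_le hker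
  have hrangele : Nat.card φ.range ≤ p := h2 ▸ Subgroup.card_le_of_le hrange
  have hAcard := Subgroup.card_eq_card_quotient_mul_card_subgroup φ.ker
  have hqr : Nat.card (A ⧸ φ.ker) = Nat.card φ.range :=
    Nat.card_congr (QuotientGroup.quotientKerEquivRange φ).toEquiv
  rw [hn, hqr] at hAcard
  have hp2le := hp.two_le
  have hle : p * p * p ≤ p * p := by
    calc p * p * p = p ^ 3 := by ring
      _ ≤ p ^ n := Nat.pow_le_pow_right hp.pos hn3
      _ = Nat.card φ.range * Nat.card φ.ker := hAcard
      _ ≤ p * p := Nat.mul_le_mul hrangele hkerle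
  have hple : p ≤ 1 := by
    have h' : (p * p) * p ≤ (p * p) * 1 := by simpa [mul_comm, mul_assoc, mul_one] using hle
    exact Nat.le_of_mul_le_mul_left h' (by positivity)
  omega

/-- Let `E` be an extra-special `p`-group acted on by a group `R = ⟨α⟩` of prime order
`r ≠ p` with `E = [E,R]`, where `E` arises as `[P,R]` for `P` a central product of `r`
copies of an extra-special group of order `p³` cyclically permuted by `R`. Then `E`
contains a non-central element of prime order. -/
theorem stmt_14 {P : Type*} [Group P] [Finite P] (p r : ℕ) (hp : p.Prime)
    (hr : r.Prime) (hrp : r ≠ p) [NeZero r]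
    (Asub : Fin r → Subgroup P)
    (hextra : ∀ i : Fin r, IsExtraspecial p (Asub i))
    (hcard : ∀ i : Fin r, Nat.card (Asub i) = p ^ 3)
    (hiso : ∀ i : Fin r, Nonempty ((Asub i) ≃* (Asub 0)))
    (hsup : ⨆ i, Asub i = ⊤)
    (hcomm : ∀ i j : Fin r, i ≠ j → ∀ x ∈ Asub i, ∀ y ∈ Asub j, Commute x y)
    (hcent : ∀ i j : Fin r, i ≠ j →
      Asub i ⊓ Asub j = Asub i ⊓ Subgroup.centralizer (Asub i : Set P))
    (α : MulAut P) (hord : orderOf α = r)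
    (hperm : ∀ i : Fin r, (Asub i).map α.toMonoidHom = Asub (i + 1))
    (E : Subgroup P)
    (hEdef : E = Subgroup.closure {y : P | ∃ g : P, y = g⁻¹ * α g})
    (hEextra : IsExtraspecial p E)
    (hEcomm : E = Subgroup.closure {y : P | ∃ g ∈ E, y = g⁻¹ * α g}) :
    ∃ x ∈ E, (∃ q : ℕ, q.Prime ∧ orderOf x = q) ∧ ∃ y ∈ E, ¬ Commute x y := by
  haveI : Fact p.Prime := ⟨hp⟩
  by_cases hp2 : p = 2
  · subst hp2
    -- r is an odd prime, so r ≥ 3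
    have hr3 : 3 ≤ r := by have := hr.two_le; omega
    -- distinctness of the indices 0, 1, 2 in Fin r
    have hm1 : 1 % r = 1 := Nat.mod_eq_of_lt (by omega)
    have e1 : ((0 + 1 : Fin r) : ℕ) = 1 := by
      rw [Fin.val_add, Fin.val_zero, Fin.val_one', Nat.zero_add, hm1, hm1]
    have e2 : ((0 + 1 + 1 : Fin r) : ℕ) = 2 := by
      rw [Fin.val_add, e1, Fin.val_one', hm1, Nat.mod_eq_of_lt (by omega)]
    have h01 : (0 : Fin r) ≠ 0 + 1 := fun h' => by
      have := congrArg Fin.val h'; simp only [e1, Fin.val_zero] at this; omega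
    have h02 : (0 : Fin r) ≠ 0 + 1 + 1 := fun h' => by
      have := congrArg Fin.val h'; simp only [e2, Fin.val_zero] at this; omega
    have h12 : (0 + 1 : Fin r) ≠ 0 + 1 + 1 := fun h' => by
      have := congrArg Fin.val h'; simp only [e1, e2] at this; omega
    -- a noncommuting pair in Asub 0
    obtain ⟨hpg0, hco0, hce0⟩ := hextra 0
    obtain ⟨a, b, hab⟩ := exists_noncomm hp hco0 hce0
    have hxy : ¬ Commute (a : P) (b : P) := fun h => hab (Subtype.ext (by push_cast; exact h))
    -- squares in Asub 0 are central in Asub 0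
    have hzc2 : ∀ g : ↥(Asub 0), g ∈ Subgroup.center ↥(Asub 0) → g ^ 2 = 1 := by
      intro g hg
      have h : (⟨g, hg⟩ : Subgroup.center ↥(Asub 0)) ^ 2 = 1 := by
        rw [← hce0]; exact pow_card_eq_one'
      simpa using congrArg Subtype.val h
    have ha2 : a ^ 2 ∈ Subgroup.center ↥(Asub 0) := by
      rw [Subgroup.mem_center_iff]
      intro g
      have hz : ⁅g, a⁆ ∈ Subgroup.center ↥(Asub 0) := by
        rw [← hco0, commutator_def]
        exact Subgroup.commutator_mem_commutator (Subgroup.mem_top g) (Subgroup.mem_top a)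
      have hcm : ∀ c, Commute ⁅g, a⁆ c := fun c => ((Subgroup.mem_center_iff.mp hz) c).symm
      have hconj : g * a ^ 2 * g⁻¹ = a ^ 2 := by
        calc g * a ^ 2 * g⁻¹ = (g * a * g⁻¹) ^ 2 := by rw [conj_pow]
          _ = (⁅g, a⁆ * a) ^ 2 := by congr 1; group
          _ = ⁅g, a⁆ ^ 2 * a ^ 2 := (hcm a).mul_pow 2
          _ = a ^ 2 := by rw [hzc2 _ hz, one_mul]
      calc g * a ^ 2 = g * a ^ 2 * g⁻¹ * g := by group
        _ = a ^ 2 * g := by rw [hconj]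
    -- hence (a : P) ^ 2 commutes with everything in Asub 0, hence with everything in P
    have hsq : ∀ g ∈ Asub 0, Commute ((a : P) ^ 2) g := by
      intro g hg
      have h' := congrArg Subtype.val (Subgroup.mem_center_iff.mp ha2 ⟨g, hg⟩)
      push_cast at h'
      exact h'.symm
    have hcent_top : (⊤ : Subgroup P) ≤ Subgroup.centralizer {(a : P) ^ 2} := by
      rw [← hsup]
      refine iSup_le fun i => fun g hg => ?_
      rw [Subgroup.mem_centralizer_iff]
      rintro h hh
      rw [Set.mem_singleton_iff] at hh
      subst hh
      by_cases h0 : i = 0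
      · subst h0; exact (hsq g hg).eq
      · exact ((hcomm 0 i (Ne.symm h0) _ a.2 g hg).pow_left 2).eq
    have hxZ : ∀ g : P, Commute ((a : P) ^ 2) g := by
      intro g
      have h' := hcent_top (Subgroup.mem_top g)
      rw [Subgroup.mem_centralizer_iff] at h'
      exact h' _ rfl
    have hαZ : ∀ g : P, Commute (α ((a : P) ^ 2)) g := by
      intro g
      have h := congrArg α (hxZ (α.symm g)).eq
      rw [map_mul, map_mul, MulEquiv.apply_symm_apply] at h
      exact h
    -- memberships
    have hαa1 : α (a : P) ∈ Asub (0 + 1) := by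
      rw [← hperm 0]; exact ⟨_, a.2, rfl⟩
    have hαb1 : α (b : P) ∈ Asub (0 + 1) := by
      rw [← hperm 0]; exact ⟨_, b.2, rfl⟩
    have hααb2 : α (α (b : P)) ∈ Asub (0 + 1 + 1) := by
      rw [← hperm (0 + 1)]; exact ⟨_, hαb1, rfl⟩
    have hαx2_1 : α ((a : P) ^ 2) ∈ Asub (0 + 1) := by
      rw [← hperm 0]; exact ⟨_, pow_mem a.2 2, rfl⟩
    have hαx2_0 : α ((a : P) ^ 2) ∈ Asub 0 := by
      have hmem : α ((a : P) ^ 2) ∈ Asub (0 + 1) ⊓ Asub 0 := by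
        rw [hcent (0 + 1) 0 h01.symm]
        exact ⟨hαx2_1, Subgroup.mem_centralizer_iff.mpr fun h hh => ((hαZ h).eq).symm⟩
      exact hmem.2
    -- the image of the center of Asub 0 in P
    have hScard : Nat.card ((Subgroup.center ↥(Asub 0)).map (Asub 0).subtype) = 2 := by
      rw [← hce0]
      exact (Nat.card_congr ((Subgroup.center ↥(Asub 0)).equivMapOfInjective _
        (Subgroup.subtype_injective _)).toEquiv).symm
    have hcS : (a : P) ^ 2 ∈ (Subgroup.center ↥(Asub 0)).map (Asub 0).subtype :=
      ⟨a ^ 2, ha2, by push_cast; rfl⟩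
    have hαS : α ((a : P) ^ 2) ∈ (Subgroup.center ↥(Asub 0)).map (Asub 0).subtype :=
      ⟨⟨α ((a : P) ^ 2), hαx2_0⟩,
        Subgroup.mem_center_iff.mpr fun c => Subtype.ext (((hαZ c).eq).symm), rfl⟩
    -- α fixes (a : P) ^ 2
    have hfix : α ((a : P) ^ 2) = (a : P) ^ 2 := by
      by_cases hone : (a : P) ^ 2 = 1
      · rw [hone, map_one]
      · have hαone : α ((a : P) ^ 2) ≠ 1 := fun h => hone (by
          have h2 := congrArg α.symm h
          rwa [MulEquiv.symm_apply_apply, map_one] at h2)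
        exact eq_of_card_two hScard hαS hcS hαone hone
    -- commuting relations
    have c1 : Commute (a : P) (α (a : P)) := hcomm 0 (0 + 1) h01 _ a.2 _ hαa1
    have c2 : Commute (a : P) (α (α (b : P))) := hcomm 0 (0 + 1 + 1) h02 _ a.2 _ hααb2
    have c3 : Commute (α (a : P)) (b : P) := hcomm (0 + 1) 0 h01.symm _ hαa1 _ b.2
    have c4 : Commute (α (a : P)) (α (α (b : P))) := hcomm (0 + 1) (0 + 1 + 1) h12 _ hαa1 _ hααb2
    -- the elements u and v
    refine ⟨(a : P)⁻¹ * α (a : P), ?_, ⟨2, hp, ?_⟩, (b : P)⁻¹ * α (α (b : P)), ?_, ?_⟩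
    · rw [hEdef]; exact Subgroup.subset_closure ⟨(a : P), rfl⟩
    · -- order 2
      have hu2 : ((a : P)⁻¹ * α (a : P)) ^ 2 = 1 := by
        rw [(c1.inv_left).mul_pow, inv_pow, ← map_pow, hfix, inv_mul_cancel]
      have hune : (a : P)⁻¹ * α (a : P) ≠ 1 := by
        intro h
        have hxe : (a : P) = α (a : P) := inv_mul_eq_one.mp h
        have hx01 : (a : P) ∈ Asub 0 ⊓ Asub (0 + 1) := ⟨a.2, by rw [hxe]; exact hαa1⟩
        rw [hcent 0 (0 + 1) h01] at hx01
        have h'' := Subgroup.mem_centralizer_iff.mp hx01.2 _ b.2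
        exact hxy h''.symm
      exact orderOf_eq_prime hu2 hune
    · have heq : (b : P)⁻¹ * α (α (b : P)) =
          ((b : P)⁻¹ * α (b : P)) * ((α (b : P))⁻¹ * α (α (b : P))) := by group
      rw [heq, hEdef]
      exact mul_mem (Subgroup.subset_closure ⟨_, rfl⟩) (Subgroup.subset_closure ⟨_, rfl⟩)
    · intro hcv
      have hcv' : ((a : P)⁻¹ * α (a : P)) * ((b : P)⁻¹ * α (α (b : P))) =
          ((b : P)⁻¹ * α (α (b : P))) * ((a : P)⁻¹ * α (a : P)) := hcv
      have e1' : (a : P)⁻¹ * α (a : P) * ((b : P)⁻¹ * α (α (b : P))) =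
          (a : P)⁻¹ * (b : P)⁻¹ * (α (a : P) * α (α (b : P))) := by
        rw [mul_assoc ((a : P))⁻¹, ← mul_assoc (α (a : P)), (c3.inv_right).eq,
          mul_assoc ((b : P))⁻¹, ← mul_assoc ((a : P))⁻¹]
      have e2' : (b : P)⁻¹ * α (α (b : P)) * ((a : P)⁻¹ * α (a : P)) =
          (b : P)⁻¹ * (a : P)⁻¹ * (α (a : P) * α (α (b : P))) := by
        rw [mul_assoc ((b : P))⁻¹, ← mul_assoc (α (α (b : P))), (c2.symm.inv_right).eq,
          mul_assoc ((a : P))⁻¹, c4.symm.eq, ← mul_assoc ((b : P))⁻¹]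
      rw [e1', e2'] at hcv'
      have hfin : (a : P)⁻¹ * (b : P)⁻¹ = (b : P)⁻¹ * (a : P)⁻¹ := mul_right_cancel hcv'
      have hcc : Commute ((a : P))⁻¹ ((b : P))⁻¹ := hfin
      exact hxy (by simpa using hcc.inv_inv)
  · obtain ⟨hpg, hco, hce⟩ := hEextra
    obtain ⟨a, hanc, hane, hap⟩ := odd_case hp hp2 hpg hco hce
    rw [Subgroup.mem_center_iff] at hanc
    push_neg at hanc
    obtain ⟨b, hb⟩ := hanc
    refine ⟨(a : P), a.2, ⟨p, hp, ?_⟩, (b : P), b.2, ?_⟩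
    · apply orderOf_eq_prime
      · have h' : ((a : P)) ^ p = ((a ^ p : E) : P) := by push_cast; rfl
        rw [h', hap]; simp
      · simpa using hane
    · intro hcxy
      apply hb
      apply Subtype.ext
      push_cast
      exact hcxy.symm
end
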